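/- arXiv:1308.0569 — 3 statements merged into one kernel-verified Lean document; each statement's English description precedes it below -/
import Mathlib

section
/- Let T > 0 and k₀ > 0, and let {u^ε}_{ε ∈ (0,1)} be a family of smooth solutions of the Allen–Cahn equation ∂ₜu = Δu − ε^{-2} f(u) on ℝᴺ × (0,T) with |u^ε(x,t)| ≤ k₀ for all (x,t) and all ε ∈ (0,1). Then for every compact subset K ⊂ ℝᴺ and every τ ∈ (0,T) there exists a constant k̃ > 0 (independent of ε) such that for all ε ∈ (0,1): ‖∇u^ε(·,t)‖_{L^∞(K)} ≤ k̃/ε for every t ∈ (τ,T), and consequently ε ξ^ε(x,t) ≤ k̃ for all x ∈ K and t ∈ (τ,T). -/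
set_option maxHeartbeats 1000000

open Set Filter Topology

/-- The Euclidean Laplacian of `u : ℝᴺ → ℝ`, as the trace of the second derivative
computed on the standard orthonormal basis. -/
noncomputable def lap {N : ℕ} (u : EuclideanSpace ℝ (Fin N) → ℝ)
    (x : EuclideanSpace ℝ (Fin N)) : ℝ :=
  ∑ i : Fin N, fderiv ℝ (fun y => fderiv ℝ u y (EuclideanSpace.single i 1)) x
    (EuclideanSpace.single i 1)


namespace AC
variable {X : Type*} [NormedAddCommGroup X] [NormedSpace ℝ X]

/-- directional (partial) derivative -/
noncomputable def pd (z : X) (G : X → ℝ) : X → ℝ := fun p => fderiv ℝ G p z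

/-- smoothness notion we propagate -/
def Sm (s : Set X) (G : X → ℝ) : Prop := ContDiffOn ℝ ((⊤ : ℕ∞) : WithTop ℕ∞) G s

lemma inf_add_one : ((⊤ : ℕ∞) : WithTop ℕ∞) + 1 = ((⊤ : ℕ∞) : WithTop ℕ∞) := by
  rfl

lemma Sm.differentiableAt {s : Set X} {G : X → ℝ} (hG : Sm s G) (hs : IsOpen s)
    {p : X} (hp : p ∈ s) : DifferentiableAt ℝ G p :=
  ((hG.differentiableOn (by simp)).differentiableAt (hs.mem_nhds hp))

lemma Sm.contDiffAt {s : Set X} {G : X → ℝ} (hG : Sm s G) (hs : IsOpen s)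
    {p : X} (hp : p ∈ s) : ContDiffAt ℝ ((⊤ : ℕ∞) : WithTop ℕ∞) G p :=
  ContDiffOn.contDiffAt hG (hs.mem_nhds hp)

lemma Sm.fderiv {s : Set X} {G : X → ℝ} (hG : Sm s G) (hs : IsOpen s) :
    ContDiffOn ℝ ((⊤ : ℕ∞) : WithTop ℕ∞) (fderiv ℝ G) s := by
  have h := (contDiffOn_succ_iff_fderiv_of_isOpen (n := ((⊤ : ℕ∞) : WithTop ℕ∞)) hs).1
    (by rw [inf_add_one]; exact hG)
  exact h.2.2

lemma Sm.pd {s : Set X} {G : X → ℝ} (hG : Sm s G) (hs : IsOpen s) (z : X) :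
    Sm s (pd z G) :=
  (hG.fderiv hs).clm_apply contDiffOn_const

lemma Sm.mul {s : Set X} {G₁ G₂ : X → ℝ} (h₁ : Sm s G₁) (h₂ : Sm s G₂) :
    Sm s (fun p => G₁ p * G₂ p) := ContDiffOn.mul h₁ h₂

lemma Sm.add {s : Set X} {G₁ G₂ : X → ℝ} (h₁ : Sm s G₁) (h₂ : Sm s G₂) :
    Sm s (fun p => G₁ p + G₂ p) := ContDiffOn.add h₁ h₂

lemma Sm.sub {s : Set X} {G₁ G₂ : X → ℝ} (h₁ : Sm s G₁) (h₂ : Sm s G₂) :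
    Sm s (fun p => G₁ p - G₂ p) := ContDiffOn.sub h₁ h₂

lemma Sm.sum {s : Set X} {ι : Type*} {t : Finset ι} {G : ι → X → ℝ}
    (h : ∀ i ∈ t, Sm s (G i)) : Sm s (fun p => ∑ i ∈ t, G i p) :=
  ContDiffOn.sum h

lemma Sm.sq {s : Set X} {G : X → ℝ} (h : Sm s G) : Sm s (fun p => (G p) ^ 2) := by
  simpa [pow_two] using h.mul h

lemma Sm.const {s : Set X} (c : ℝ) : Sm s (fun _ => c) := contDiffOn_const

lemma Sm.const_mul {s : Set X} {G : X → ℝ} (h : Sm s G) (c : ℝ) :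
    Sm s (fun p => c * G p) := (Sm.const c).mul h

lemma Sm.comp1d {s : Set X} {G : X → ℝ} (h : Sm s G) {g : ℝ → ℝ}
    (hg : ContDiff ℝ ((⊤ : ℕ∞) : WithTop ℕ∞) g) : Sm s (fun p => g (G p)) :=
  hg.comp_contDiffOn h

/- pointwise computation rules -/

lemma pd_congr {s : Set X} (hs : IsOpen s) {p : X} (hp : p ∈ s) {G₁ G₂ : X → ℝ}
    (h : ∀ q ∈ s, G₁ q = G₂ q) (z : X) : pd z G₁ p = pd z G₂ p := by
  have : G₁ =ᶠ[𝓝 p] G₂ := by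
    filter_upwards [hs.mem_nhds hp] with q hq using h q hq
  simp only [pd, this.fderiv_eq]

lemma pd_mul {p : X} {G₁ G₂ : X → ℝ} (h₁ : DifferentiableAt ℝ G₁ p)
    (h₂ : DifferentiableAt ℝ G₂ p) (z : X) :
    pd z (fun q => G₁ q * G₂ q) p = pd z G₁ p * G₂ p + G₁ p * pd z G₂ p := by
  simp only [pd, fderiv_fun_mul h₁ h₂]
  simp only [ContinuousLinearMap.add_apply, ContinuousLinearMap.smul_apply, smul_eq_mul]
  ring

lemma pd_add {p : X} {G₁ G₂ : X → ℝ} (h₁ : DifferentiableAt ℝ G₁ p)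
    (h₂ : DifferentiableAt ℝ G₂ p) (z : X) :
    pd z (fun q => G₁ q + G₂ q) p = pd z G₁ p + pd z G₂ p := by
  simp only [pd, fderiv_fun_add h₁ h₂]; simp

lemma pd_sub {p : X} {G₁ G₂ : X → ℝ} (h₁ : DifferentiableAt ℝ G₁ p)
    (h₂ : DifferentiableAt ℝ G₂ p) (z : X) :
    pd z (fun q => G₁ q - G₂ q) p = pd z G₁ p - pd z G₂ p := by
  simp only [pd, fderiv_fun_sub h₁ h₂]; simp

lemma pd_const {p : X} (c : ℝ) (z : X) : pd z (fun _ => c) p = 0 := by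
  simp [pd]

lemma pd_const_mul {p : X} {G : X → ℝ} (h : DifferentiableAt ℝ G p) (c : ℝ) (z : X) :
    pd z (fun q => c * G q) p = c * pd z G p := by
  simp [pd, fderiv_const_mul h]

lemma pd_sum {p : X} {ι : Type*} {t : Finset ι} {G : ι → X → ℝ}
    (h : ∀ i ∈ t, DifferentiableAt ℝ (G i) p) (z : X) :
    pd z (fun q => ∑ i ∈ t, G i q) p = ∑ i ∈ t, pd z (G i) p := by
  simp [pd, fderiv_fun_sum h]

lemma pd_sq {p : X} {G : X → ℝ} (h : DifferentiableAt ℝ G p) (z : X) :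
    pd z (fun q => (G q) ^ 2) p = 2 * G p * pd z G p := by
  have := pd_mul h h z
  simp only [← pow_two] at this
  rw [this]; ring

lemma pd_comp1d {p : X} {G : X → ℝ} (h : DifferentiableAt ℝ G p) {g : ℝ → ℝ}
    (hg : DifferentiableAt ℝ g (G p)) (z : X) :
    pd z (fun q => g (G q)) p = deriv g (G p) * pd z G p := by
  have h1 : HasFDerivAt (g ∘ G) ((deriv g (G p)) • fderiv ℝ G p) p :=
    (hg.hasDerivAt).comp_hasFDerivAt p h.hasFDerivAt
  have : fderiv ℝ (fun q => g (G q)) p = (deriv g (G p)) • fderiv ℝ G p := h1.fderiv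
  simp [pd, this]

/-- Schwarz symmetry of second partial derivatives -/
lemma pd_comm {s : Set X} (hs : IsOpen s) {p : X} (hp : p ∈ s) {G : X → ℝ}
    (hG : Sm s G) (z z' : X) : pd z (pd z' G) p = pd z' (pd z G) p := by
  have hsymm : IsSymmSndFDerivAt ℝ G p :=
    (hG.contDiffAt hs hp).isSymmSndFDerivAt (by
      have h2 : (2 : WithTop ℕ∞) = ((2:ℕ∞) : WithTop ℕ∞) := rfl
      rw [h2, minSmoothness_of_isRCLikeNormedField]; exact_mod_cast le_top)
  have hdf : DifferentiableAt ℝ (fderiv ℝ G) p := by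
    have := ((hG.fderiv hs).differentiableOn (by simp)).differentiableAt
      (hs.mem_nhds hp)
    exact this
  have key : ∀ w w' : X, pd w (pd w' G) p = fderiv ℝ (fderiv ℝ G) p w w' := by
    intro w w'
    have h3 : fderiv ℝ (fun q => (fderiv ℝ G q) w') p
        = (fderiv ℝ (fderiv ℝ G) p).flip w' := by
      rw [fderiv_clm_apply hdf (differentiableAt_const w')]
      ext ζ
      simp
    show fderiv ℝ (fun q => (fderiv ℝ G q) w') p w = _
    rw [h3, ContinuousLinearMap.flip_apply]
  rw [key, key, hsymm.eq]

end AC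

namespace AC
variable {N : ℕ}

abbrev Euc (N : ℕ) := EuclideanSpace ℝ (Fin N)

noncomputable def ee (N : ℕ) (i : Fin N) : Euc N := EuclideanSpace.single i 1

/-- derivative along an affine curve -/
lemma curve_hasDerivAt {X : Type*} [NormedAddCommGroup X] [NormedSpace ℝ X]
    (V : X → ℝ) (p z : X) (σ₀ : ℝ) (h : DifferentiableAt ℝ V (p + σ₀ • z)) :
    HasDerivAt (fun σ => V (p + σ • z)) (pd z V (p + σ₀ • z)) σ₀ := by
  have hc : HasDerivAt (fun σ : ℝ => p + σ • z) z σ₀ := by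
    simpa using ((hasDerivAt_id σ₀).smul_const z).const_add p
  exact h.hasFDerivAt.comp_hasDerivAt σ₀ hc

lemma slice_fderiv (V : Euc N × ℝ → ℝ) (x : Euc N) (t : ℝ)
    (h : DifferentiableAt ℝ V (x, t)) (z : Euc N) :
    fderiv ℝ (fun y => V (y, t)) x z = pd (z, (0:ℝ)) V (x, t) := by
  have hc : HasFDerivAt (fun y : Euc N => (y, t))
      ((ContinuousLinearMap.id ℝ (Euc N)).prod 0) x :=
    HasFDerivAt.prodMk (hasFDerivAt_id x) (hasFDerivAt_const t x)
  have h2 := (h.hasFDerivAt.comp x hc).fderiv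
  rw [show (fun y => V (y, t)) = V ∘ (fun y => (y, t)) from rfl, h2]
  rfl

lemma slice_hasDerivAt (V : Euc N × ℝ → ℝ) (x : Euc N) (t : ℝ)
    (h : DifferentiableAt ℝ V (x, t)) :
    HasDerivAt (fun s => V (x, s)) (pd ((0 : Euc N), (1:ℝ)) V (x, t)) t := by
  have hc : HasDerivAt (fun σ : ℝ => ((x : Euc N), σ)) ((0 : Euc N), (1:ℝ)) t :=
    HasDerivAt.prodMk (hasDerivAt_const t x) (hasDerivAt_id t)
  exact h.hasFDerivAt.comp_hasDerivAt t hc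

lemma slice_deriv (V : Euc N × ℝ → ℝ) (x : Euc N) (t : ℝ)
    (h : DifferentiableAt ℝ V (x, t)) :
    deriv (fun s => V (x, s)) t = pd ((0 : Euc N), (1:ℝ)) V (x, t) :=
  (slice_hasDerivAt V x t h).deriv

lemma lap_slice (V : Euc N × ℝ → ℝ) (x : Euc N) (t : ℝ)
    (H : ∀ y, DifferentiableAt ℝ V (y, t))
    (H2 : ∀ i : Fin N, DifferentiableAt ℝ (pd (ee N i, (0:ℝ)) V) (x, t)) :
    lap (fun y => V (y, t)) x = ∑ i, pd (ee N i, (0:ℝ)) (pd (ee N i, (0:ℝ)) V) (x, t) := by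
  unfold lap
  refine Finset.sum_congr rfl fun i _ => ?_
  have hfun : (fun y => fderiv ℝ (fun y' => V (y', t)) y (EuclideanSpace.single i 1))
      = fun y => pd (ee N i, (0:ℝ)) V (y, t) := by
    funext y
    exact slice_fderiv V y t (H y) _
  rw [hfun]
  exact slice_fderiv (pd (ee N i, (0:ℝ)) V) x t (H2 i) _

lemma grad_norm_sq (G : Euc N → ℝ) (x : Euc N) (h : DifferentiableAt ℝ G x) :
    ‖gradient G x‖ ^ 2 = ∑ i, (fderiv ℝ G x (ee N i)) ^ 2 := by
  have hcoord : ∀ i, gradient G x i = fderiv ℝ G x (ee N i) := by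
    intro i
    have h1 : (inner ℝ (gradient G x) (EuclideanSpace.single i (1:ℝ)) : ℝ)
        = fderiv ℝ G x (EuclideanSpace.single i 1) := by
      have : gradient G x = (InnerProductSpace.toDual ℝ (Euc N)).symm (fderiv ℝ G x) := rfl
      rw [this, InnerProductSpace.toDual_symm_apply]
    rw [EuclideanSpace.inner_single_right] at h1
    simpa [ee] using h1
  have hn : ‖gradient G x‖ ^ 2 = ∑ i, (gradient G x i) ^ 2 := by
    rw [EuclideanSpace.norm_eq, Real.sq_sqrt]
    · simp
    · positivity
  rw [hn]
  exact Finset.sum_congr rfl fun i _ => by rw [hcoord i]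

/- coordinate functions on `Euc N × ℝ` -/

lemma sm_coord {s : Set (Euc N × ℝ)} (i : Fin N) : Sm s (fun p : Euc N × ℝ => p.1 i) := by
  have : (fun p : Euc N × ℝ => p.1 i)
      = ⇑((EuclideanSpace.proj i).comp (ContinuousLinearMap.fst ℝ (Euc N) ℝ)) := rfl
  rw [this]
  exact (ContinuousLinearMap.contDiff _).contDiffOn

lemma pd_coord (i : Fin N) (z : Euc N × ℝ) (p : Euc N × ℝ) :
    pd z (fun q : Euc N × ℝ => q.1 i) p = z.1 i := by
  have : (fun p : Euc N × ℝ => p.1 i)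
      = ⇑((EuclideanSpace.proj i).comp (ContinuousLinearMap.fst ℝ (Euc N) ℝ)) := rfl
  rw [pd, this, ContinuousLinearMap.fderiv]
  rfl

lemma sm_time {s : Set (Euc N × ℝ)} : Sm s (fun p : Euc N × ℝ => p.2) := by
  have : (fun p : Euc N × ℝ => p.2) = ⇑(ContinuousLinearMap.snd ℝ (Euc N) ℝ) := rfl
  rw [this]
  exact (ContinuousLinearMap.contDiff _).contDiffOn

lemma pd_time (z : Euc N × ℝ) (p : Euc N × ℝ) :
    pd z (fun q : Euc N × ℝ => q.2) p = z.2 := by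
  have : (fun p : Euc N × ℝ => p.2) = ⇑(ContinuousLinearMap.snd ℝ (Euc N) ℝ) := rfl
  rw [pd, this, ContinuousLinearMap.fderiv]
  rfl

lemma ee_apply (i j : Fin N) : ee N i j = if j = i then (1:ℝ) else 0 :=
  EuclideanSpace.single_apply i 1 j

lemma sm_diffAt_on {s : Set (Euc N × ℝ)} {G : Euc N × ℝ → ℝ} (hG : Sm s G)
    (hs : IsOpen s) {p : Euc N × ℝ} (hp : p ∈ s) : DifferentiableAt ℝ G p :=
  hG.differentiableAt hs hp

end AC

namespace AC

/-- at a right-side max point of `g` on `[a,b]`, the derivative is nonnegative -/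
lemma deriv_nonneg_at_max {g : ℝ → ℝ} {a b s d : ℝ} (has : a < s) (hsb : s ≤ b)
    (hmax : ∀ σ ∈ Icc a b, g σ ≤ g s) (hd : HasDerivAt g d s) : 0 ≤ d := by
  have hdw : HasDerivWithinAt g d (Iio s) s := hd.hasDerivWithinAt
  rw [hasDerivWithinAt_iff_tendsto_slope] at hdw
  have hne : (𝓝[(Iio s) \ {s}] s).NeBot := by
    rw [show (Iio s) \ {s} = Iio s by simp [Set.diff_eq, Set.inter_eq_self_of_subset_left,
      Set.subset_compl_singleton_iff, lt_irrefl]]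
    exact nhdsLT_neBot s
  refine ge_of_tendsto hdw ?_
  have hIoo : Ioo a s ∈ 𝓝[(Iio s) \ {s}] s := by
    apply mem_nhdsWithin.2
    exact ⟨Ioi a, isOpen_Ioi, has, by rintro σ ⟨h1, h2, _⟩; exact ⟨h1, h2⟩⟩
  filter_upwards [hIoo] with σ hσ
  have h1 : g σ ≤ g s := hmax σ ⟨le_of_lt hσ.1, le_trans (le_of_lt hσ.2) hsb⟩
  have h2 : σ - s < 0 := by linarith [hσ.2]
  rw [slope_def_field]
  have h3 := div_nonneg (neg_nonneg.2 (by linarith : g σ - g s ≤ 0)) (neg_nonneg.2 h2.le)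
  rw [neg_div_neg_eq] at h3
  exact h3

/-- second derivative test: at an interior local max, the second derivative is nonpositive -/
lemma second_deriv_nonpos_at_localmax {g g' : ℝ → ℝ} {c d : ℝ}
    (hg : ∀ᶠ σ in 𝓝 c, HasDerivAt g (g' σ) σ) (hd : HasDerivAt g' d c)
    (hmax : IsLocalMax g c) : d ≤ 0 := by
  by_contra hcon
  push_neg at hcon
  have h0 : g' c = 0 := by
    have h1 : deriv g c = 0 := hmax.deriv_eq_zero
    have h2 : deriv g c = g' c := (hg.self_of_nhds).deriv
    rw [← h2, h1]
  -- eventually g' > 0 on the right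
  have hslope : ∀ᶠ σ in 𝓝[>] c, 0 < g' σ := by
    have hdw : HasDerivWithinAt g' d (Ioi c) c := hd.hasDerivWithinAt
    rw [hasDerivWithinAt_iff_tendsto_slope] at hdw
    have h3 : ∀ᶠ σ in 𝓝[(Ioi c) \ {c}] c, 0 < slope g' c σ :=
      hdw.eventually (eventually_gt_nhds hcon)
    have heq : (Ioi c) \ {c} = Ioi c := by
      simp [Set.diff_eq, Set.inter_eq_self_of_subset_left,
        Set.subset_compl_singleton_iff, lt_irrefl]
    rw [heq] at h3
    filter_upwards [h3, self_mem_nhdsWithin] with σ hσ hσ2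
    rw [slope_def_field, h0, sub_zero] at hσ
    have : (0:ℝ) < σ - c := by simp only [mem_Ioi] at hσ2; linarith
    have h4 := mul_pos hσ this
    rw [div_mul_cancel₀ _ (by linarith : σ - c ≠ 0)] at h4
    exact h4
  -- extract a concrete interval
  have hev : ∀ᶠ σ in 𝓝 c, HasDerivAt g (g' σ) σ ∧ g σ ≤ g c := hg.and hmax
  rw [Metric.eventually_nhds_iff] at hev
  obtain ⟨ε₁, hε₁, hball⟩ := hev
  rw [eventually_nhdsWithin_iff, Metric.eventually_nhds_iff] at hslope
  obtain ⟨ε₂, hε₂, hball₂⟩ := hslope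
  set δ := min ε₁ ε₂ / 2 with hδdef
  have hδ : 0 < δ := by positivity
  have hδ₁ : δ < ε₁ := by
    have := min_le_left ε₁ ε₂; simp only [hδdef]; linarith
  have hδ₂ : δ < ε₂ := by
    have := min_le_right ε₁ ε₂; simp only [hδdef]; linarith
  have hcont : ContinuousOn g (Icc c (c + δ)) := by
    intro σ hσ
    have : dist σ c < ε₁ := by
      rw [Real.dist_eq, abs_lt]
      constructor <;> [linarith [hσ.1]; linarith [hσ.2]]
    exact ((hball this).1.continuousAt).continuousWithinAt
  have hderiv : ∀ σ ∈ Ioo c (c + δ), HasDerivAt g (g' σ) σ := by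
    intro σ hσ
    have : dist σ c < ε₁ := by
      rw [Real.dist_eq, abs_lt]
      constructor <;> [linarith [hσ.1]; linarith [hσ.2]]
    exact (hball this).1
  obtain ⟨ξ, hξ, hξeq⟩ := exists_hasDerivAt_eq_slope g g' (by linarith : c < c + δ) hcont hderiv
  have hgpos : 0 < g' ξ := by
    apply hball₂
    · rw [Real.dist_eq, abs_lt]
      constructor <;> [linarith [hξ.1]; linarith [hξ.2]]
    · exact hξ.1
  have hgc : g (c + δ) ≤ g c := by
    have : dist (c + δ) c < ε₁ := by
      rw [Real.dist_eq, abs_lt]; constructor <;> [linarith; linarith]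
    exact (hball this).2
  rw [hξeq] at hgpos
  have h5 : (0:ℝ) < c + δ - c := by linarith
  have h6 := mul_pos hgpos h5
  rw [div_mul_cancel₀ _ (by linarith : c + δ - c ≠ 0)] at h6
  linarith

/-- at a spatial local max of a smooth function, second pure derivatives are `≤ 0` -/
lemma pd2_nonpos_at_localmax {N : ℕ} {s : Set (Euc N × ℝ)} (hs : IsOpen s)
    {G : Euc N × ℝ → ℝ} (hG : Sm s G) {x : Euc N} {t : ℝ} (hmem : (x, t) ∈ s)
    (hmax : IsLocalMax (fun y => G (y, t)) x) (i : Fin N) :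
    pd (ee N i, (0:ℝ)) (pd (ee N i, (0:ℝ)) G) (x, t) ≤ 0 := by
  set z : Euc N × ℝ := (ee N i, (0:ℝ)) with hz
  set c : ℝ → Euc N × ℝ := fun σ => (x, t) + σ • z with hc
  have hc0 : c 0 = (x, t) := by simp [hc]
  have hccont : Continuous c := by
    apply Continuous.add continuous_const
    exact continuous_id.smul continuous_const
  have hev : ∀ᶠ σ in 𝓝 (0:ℝ), c σ ∈ s := by
    have : Tendsto c (𝓝 0) (𝓝 (x, t)) := by
      rw [← hc0]; exact hccont.tendsto 0
    exact this.eventually (hs.mem_nhds hmem)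
  have hg : ∀ᶠ σ in 𝓝 (0:ℝ), HasDerivAt (fun σ' => G (c σ')) (pd z G (c σ)) σ := by
    filter_upwards [hev] with σ hσ
    have := curve_hasDerivAt G (x, t) z σ (by
      rw [show (x,t) + σ • z = c σ from rfl]; exact hG.differentiableAt hs hσ)
    simpa [hc] using this
  have hd : HasDerivAt (fun σ => pd z G (c σ)) (pd z (pd z G) (x, t)) 0 := by
    have := curve_hasDerivAt (pd z G) (x, t) z 0 (by
      simpa using (hG.pd hs z).differentiableAt hs hmem)
    simpa [hc] using this
  have hmax' : IsLocalMax (fun σ => G (c σ)) 0 := by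
    have htend : Tendsto (fun σ : ℝ => x + σ • ee N i) (𝓝 0) (𝓝 x) := by
      have : Continuous (fun σ : ℝ => x + σ • ee N i) :=
        continuous_const.add (continuous_id.smul continuous_const)
      simpa using this.tendsto 0
    have := htend.eventually hmax
    have hceq : ∀ σ : ℝ, c σ = (x + σ • ee N i, t) := by
      intro σ
      simp [hc, hz, Prod.ext_iff]
    rw [IsLocalMax, IsMaxFilter]
    filter_upwards [this] with σ hσ
    simp only [hceq, hc0]
    simpa using hσ
  have := second_deriv_nonpos_at_localmax hg hd hmax'
  exact this

end AC

namespace AC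
variable {N : ℕ}

noncomputable def Dx (i : Fin N) (G : Euc N × ℝ → ℝ) : Euc N × ℝ → ℝ :=
  pd (ee N i, (0:ℝ)) G

noncomputable def Dtm (G : Euc N × ℝ → ℝ) : Euc N × ℝ → ℝ :=
  pd ((0 : Euc N), (1:ℝ)) G

noncomputable def Wf (V : Euc N × ℝ → ℝ) : Euc N × ℝ → ℝ :=
  fun p => ∑ i, (Dx i V p) ^ 2

noncomputable def S2f (V : Euc N × ℝ → ℝ) : Euc N × ℝ → ℝ :=
  fun p => ∑ i : Fin N, ∑ j : Fin N, (Dx i (Dx j V) p) ^ 2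

noncomputable def lapJ (G : Euc N × ℝ → ℝ) : Euc N × ℝ → ℝ :=
  fun p => ∑ i, Dx i (Dx i G) p

lemma sm_dx {Ω : Set (Euc N × ℝ)} (hΩ : IsOpen Ω) {V : Euc N × ℝ → ℝ} (hV : Sm Ω V)
    (i : Fin N) : Sm Ω (Dx i V) := hV.pd hΩ _

lemma sm_dtm {Ω : Set (Euc N × ℝ)} (hΩ : IsOpen Ω) {V : Euc N × ℝ → ℝ} (hV : Sm Ω V) :
    Sm Ω (Dtm V) := hV.pd hΩ _

lemma sm_wf {Ω : Set (Euc N × ℝ)} (hΩ : IsOpen Ω) {V : Euc N × ℝ → ℝ} (hV : Sm Ω V) :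
    Sm Ω (Wf V) := Sm.sum fun i _ => ((hV.pd hΩ _).sq)

lemma sm_lapJ {Ω : Set (Euc N × ℝ)} (hΩ : IsOpen Ω) {V : Euc N × ℝ → ℝ} (hV : Sm Ω V) :
    Sm Ω (lapJ V) := Sm.sum fun i _ => (((hV.pd hΩ _).pd hΩ _))

/-- derivative of `Wf` in any direction -/
lemma pd_Wf {Ω : Set (Euc N × ℝ)} (hΩ : IsOpen Ω) {V : Euc N × ℝ → ℝ} (hV : Sm Ω V)
    (z : Euc N × ℝ) {p : Euc N × ℝ} (hp : p ∈ Ω) :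
    pd z (Wf V) p = 2 * ∑ i, Dx i V p * pd z (Dx i V) p := by
  have hdiff : ∀ i : Fin N, DifferentiableAt ℝ (Dx i V) p :=
    fun i => (hV.pd hΩ _).differentiableAt hΩ hp
  have h1 : pd z (Wf V) p = ∑ i, pd z (fun q => (Dx i V q) ^ 2) p :=
    pd_sum (fun i _ => (hdiff i).pow 2) z
  rw [h1, Finset.mul_sum]
  refine Finset.sum_congr rfl fun i _ => ?_
  rw [pd_sq (hdiff i) z]; ring

/-- Schwarz: mixed time/space derivatives commute -/
lemma dx_dtm_comm {Ω : Set (Euc N × ℝ)} (hΩ : IsOpen Ω) {V : Euc N × ℝ → ℝ} (hV : Sm Ω V)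
    (i : Fin N) {p : Euc N × ℝ} (hp : p ∈ Ω) :
    Dx i (Dtm V) p = Dtm (Dx i V) p := pd_comm hΩ hp hV _ _

/-- third-derivative commutation -/
lemma dx_lapJ_comm {Ω : Set (Euc N × ℝ)} (hΩ : IsOpen Ω) {V : Euc N × ℝ → ℝ} (hV : Sm Ω V)
    (j : Fin N) {p : Euc N × ℝ} (hp : p ∈ Ω) :
    Dx j (lapJ V) p = lapJ (Dx j V) p := by
  have hdiff2 : ∀ i i' : Fin N, DifferentiableAt ℝ (Dx i (Dx i' V)) p :=
    fun i i' => (((hV.pd hΩ _).pd hΩ _)).differentiableAt hΩ hp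
  have h1 : Dx j (lapJ V) p = ∑ i, Dx j (Dx i (Dx i V)) p :=
    pd_sum (fun i _ => hdiff2 i i) _
  rw [h1]
  refine Finset.sum_congr rfl fun i _ => ?_
  have h2 : Dx j (Dx i (Dx i V)) p = Dx i (Dx j (Dx i V)) p :=
    pd_comm hΩ hp (hV.pd hΩ _) _ _
  have h3 : Dx i (Dx j (Dx i V)) p = Dx i (Dx i (Dx j V)) p := by
    apply pd_congr hΩ hp
    intro q hq
    exact pd_comm hΩ hq hV _ _
  rw [h2, h3]

section pde
variable {T : ℝ} {v : Euc N → ℝ → ℝ} {g : ℝ → ℝ}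

/-- the joint form of the PDE -/
lemma pde_joint
    (hV : Sm (univ ×ˢ Ioo (0:ℝ) T) (fun p : Euc N × ℝ => v p.1 p.2))
    (heq : ∀ (x : Euc N), ∀ t ∈ Ioo (0:ℝ) T,
      deriv (fun s => v x s) t = lap (fun y => v y t) x - g (v x t))
    {p : Euc N × ℝ} (hp : p ∈ (univ ×ˢ Ioo (0:ℝ) T : Set (Euc N × ℝ))) :
    Dtm (fun p : Euc N × ℝ => v p.1 p.2) p
      = lapJ (fun p : Euc N × ℝ => v p.1 p.2) p - g (v p.1 p.2) := by
  have hΩ : IsOpen (univ ×ˢ Ioo (0:ℝ) T : Set (Euc N × ℝ)) := isOpen_univ.prod isOpen_Ioo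
  set V : Euc N × ℝ → ℝ := fun p => v p.1 p.2 with hVdef
  obtain ⟨x, t⟩ := p
  have htT : t ∈ Ioo (0:ℝ) T := hp.2
  have hmem : ∀ y : Euc N, (y, t) ∈ (univ ×ˢ Ioo (0:ℝ) T : Set (Euc N × ℝ)) :=
    fun y => ⟨mem_univ _, htT⟩
  have hdV : ∀ y : Euc N, DifferentiableAt ℝ V (y, t) :=
    fun y => hV.differentiableAt hΩ (hmem y)
  have h1 : deriv (fun s => v x s) t = Dtm V (x, t) := slice_deriv V x t (hdV x)
  have h2 : lap (fun y => v y t) x = lapJ V (x, t) :=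
    lap_slice V x t hdV (fun i => (hV.pd hΩ _).differentiableAt hΩ (hmem x))
  have h3 := heq x t htT
  rw [h1, h2] at h3
  exact h3

/-- the differentiated PDE -/
lemma pde_diff
    (hV : Sm (univ ×ˢ Ioo (0:ℝ) T) (fun p : Euc N × ℝ => v p.1 p.2))
    (hg : ContDiff ℝ ((⊤ : ℕ∞) : WithTop ℕ∞) g)
    (heq : ∀ (x : Euc N), ∀ t ∈ Ioo (0:ℝ) T,
      deriv (fun s => v x s) t = lap (fun y => v y t) x - g (v x t))
    (j : Fin N) {p : Euc N × ℝ} (hp : p ∈ (univ ×ˢ Ioo (0:ℝ) T : Set (Euc N × ℝ))) :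
    Dtm (Dx j (fun p : Euc N × ℝ => v p.1 p.2)) p
      = lapJ (Dx j (fun p : Euc N × ℝ => v p.1 p.2)) p
        - deriv g (v p.1 p.2) * Dx j (fun p : Euc N × ℝ => v p.1 p.2) p := by
  have hΩ : IsOpen (univ ×ˢ Ioo (0:ℝ) T : Set (Euc N × ℝ)) := isOpen_univ.prod isOpen_Ioo
  set V : Euc N × ℝ → ℝ := fun p => v p.1 p.2 with hVdef
  have h1 : Dx j (Dtm V) p = Dx j (fun q => lapJ V q - g (V q)) p := by
    apply pd_congr hΩ hp
    intro q hq
    exact pde_joint hV heq hq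
  have hdlap : DifferentiableAt ℝ (lapJ V) p := (sm_lapJ hΩ hV).differentiableAt hΩ hp
  have hdV : DifferentiableAt ℝ V p := hV.differentiableAt hΩ hp
  have hdg : DifferentiableAt ℝ g (V p) :=
    (hg.differentiable (by simp)).differentiableAt
  have hdgV : DifferentiableAt ℝ (fun q => g (V q)) p := by
    exact hdg.comp p hdV
  have h2 : Dx j (fun q => lapJ V q - g (V q)) p
      = Dx j (lapJ V) p - deriv g (V p) * Dx j V p := by
    show pd (ee N j, (0:ℝ)) (fun q => lapJ V q - g (V q)) p = _
    rw [pd_sub hdlap hdgV]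
    have h2a : pd (ee N j, (0:ℝ)) (fun q => g (V q)) p
        = deriv g (V p) * pd (ee N j, (0:ℝ)) V p := pd_comp1d hdV hdg _
    rw [h2a]
    rfl
  have h3 : Dx j (Dtm V) p = Dtm (Dx j V) p := dx_dtm_comm hΩ hV j hp
  have h4 : Dx j (lapJ V) p = lapJ (Dx j V) p := dx_lapJ_comm hΩ hV j hp
  rw [← h3, h1, h2, h4]

/-- the heat operator applied to `Wf` -/
lemma heat_op_Wf
    (hV : Sm (univ ×ˢ Ioo (0:ℝ) T) (fun p : Euc N × ℝ => v p.1 p.2))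
    (hg : ContDiff ℝ ((⊤ : ℕ∞) : WithTop ℕ∞) g)
    (heq : ∀ (x : Euc N), ∀ t ∈ Ioo (0:ℝ) T,
      deriv (fun s => v x s) t = lap (fun y => v y t) x - g (v x t))
    {p : Euc N × ℝ} (hp : p ∈ (univ ×ˢ Ioo (0:ℝ) T : Set (Euc N × ℝ))) :
    Dtm (Wf (fun p : Euc N × ℝ => v p.1 p.2)) p
        - lapJ (Wf (fun p : Euc N × ℝ => v p.1 p.2)) p
      = -2 * S2f (fun p : Euc N × ℝ => v p.1 p.2) p
        - 2 * deriv g (v p.1 p.2) * Wf (fun p : Euc N × ℝ => v p.1 p.2) p := by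
  have hΩ : IsOpen (univ ×ˢ Ioo (0:ℝ) T : Set (Euc N × ℝ)) := isOpen_univ.prod isOpen_Ioo
  set V : Euc N × ℝ → ℝ := fun p => v p.1 p.2 with hVdef
  have hdiff1 : ∀ i : Fin N, DifferentiableAt ℝ (Dx i V) p :=
    fun i => (hV.pd hΩ _).differentiableAt hΩ hp
  have hdiff2 : ∀ i i' : Fin N, DifferentiableAt ℝ (Dx i (Dx i' V)) p :=
    fun i i' => ((hV.pd hΩ _).pd hΩ _).differentiableAt hΩ hp
  have hDtW : Dtm (Wf V) p = 2 * ∑ i, Dx i V p * Dtm (Dx i V) p := pd_Wf hΩ hV _ hp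
  have hlapW : lapJ (Wf V) p
      = 2 * S2f V p + 2 * ∑ j, Dx j V p * lapJ (Dx j V) p := by
    have hterm : ∀ i : Fin N, Dx i (Dx i (Wf V)) p
        = 2 * ∑ j, ((Dx i (Dx j V) p) ^ 2 + Dx j V p * Dx i (Dx i (Dx j V)) p) := by
      intro i
      have hcongr : Dx i (Dx i (Wf V)) p
          = pd (ee N i, (0:ℝ)) (fun q => 2 * ∑ j, Dx j V q * Dx i (Dx j V) q) p := by
        apply pd_congr hΩ hp
        intro q hq
        exact pd_Wf hΩ hV _ hq
      rw [hcongr]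
      have hdffq : ∀ j : Fin N, DifferentiableAt ℝ
          (fun q => Dx j V q * Dx i (Dx j V) q) p :=
        fun j => ((hV.pd hΩ _).differentiableAt hΩ hp).mul
          (((hV.pd hΩ _).pd hΩ _).differentiableAt hΩ hp)
      have hsumd : DifferentiableAt ℝ (fun q => ∑ j, Dx j V q * Dx i (Dx j V) q) p := by
        apply DifferentiableAt.fun_sum
        exact fun j _ => hdffq j
      rw [pd_const_mul hsumd 2]
      congr 1
      rw [pd_sum (fun j _ => hdffq j)]
      refine Finset.sum_congr rfl fun j _ => ?_
      rw [pd_mul (hdiff1 j) (hdiff2 i j)]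
      have h5 : pd (ee N i, (0:ℝ)) (Dx j V) p = Dx i (Dx j V) p := rfl
      have h6 : pd (ee N i, (0:ℝ)) (Dx i (Dx j V)) p = Dx i (Dx i (Dx j V)) p := rfl
      rw [h5, h6]
      ring
    have h7 : lapJ (Wf V) p = ∑ i, Dx i (Dx i (Wf V)) p := rfl
    rw [h7, Finset.sum_congr rfl fun i _ => hterm i]
    have h8 : S2f V p = ∑ i : Fin N, ∑ j : Fin N, (Dx i (Dx j V) p) ^ 2 := rfl
    have h9 : ∀ j : Fin N, lapJ (Dx j V) p = ∑ i, Dx i (Dx i (Dx j V)) p := fun _ => rfl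
    have hcomm : ∑ i : Fin N, ∑ j : Fin N, Dx j V p * Dx i (Dx i (Dx j V)) p
        = ∑ j : Fin N, Dx j V p * ∑ i : Fin N, Dx i (Dx i (Dx j V)) p := by
      rw [Finset.sum_comm]
      exact Finset.sum_congr rfl fun j _ => by rw [Finset.mul_sum]
    rw [h8, Finset.sum_congr rfl fun j _ => congrArg (fun r => Dx j V p * r) (h9 j),
      ← hcomm]
    simp only [Finset.mul_sum, Finset.sum_add_distrib, mul_add]
  have hdpde : ∀ j : Fin N, Dtm (Dx j V) p = lapJ (Dx j V) p - deriv g (V p) * Dx j V p :=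
    fun j => pde_diff hV hg heq j hp
  rw [hDtW, hlapW]
  have hterm2 : ∀ j : Fin N, Dx j V p * Dtm (Dx j V) p
      = Dx j V p * lapJ (Dx j V) p - deriv g (V p) * (Dx j V p) ^ 2 := by
    intro j
    rw [hdpde j]
    ring
  rw [Finset.sum_congr rfl fun j _ => hterm2 j, Finset.sum_sub_distrib, ← Finset.mul_sum]
  have h10 : Wf V p = ∑ i, (Dx i V p) ^ 2 := rfl
  rw [h10]
  ring

end pde
end AC

namespace AC
variable {N : ℕ}

noncomputable def qf (x₀ : Euc N) : Euc N × ℝ → ℝ := fun p => ∑ i, (p.1 i - x₀ i) ^ 2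
noncomputable def phf (x₀ : Euc N) : Euc N × ℝ → ℝ := fun p => (1 - qf x₀ p) ^ 2
noncomputable def th (t₀ : ℝ) : Euc N × ℝ → ℝ := fun p => p.2 - t₀

lemma sm_qf {s : Set (Euc N × ℝ)} (x₀ : Euc N) : Sm s (qf x₀) :=
  Sm.sum fun i _ => (Sm.sub (sm_coord i) (Sm.const _)).sq

lemma sm_phf {s : Set (Euc N × ℝ)} (x₀ : Euc N) : Sm s (phf x₀) :=
  ((Sm.const 1).sub (sm_qf x₀)).sq

lemma sm_th {s : Set (Euc N × ℝ)} (t₀ : ℝ) : Sm s (th t₀) :=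
  Sm.sub sm_time (Sm.const _)

lemma diffAt_qf (x₀ : Euc N) (p : Euc N × ℝ) : DifferentiableAt ℝ (qf x₀) p :=
  (sm_qf (s := univ) x₀).differentiableAt isOpen_univ (mem_univ p)

lemma diffAt_phf (x₀ : Euc N) (p : Euc N × ℝ) : DifferentiableAt ℝ (phf x₀) p :=
  (sm_phf (s := univ) x₀).differentiableAt isOpen_univ (mem_univ p)

lemma diffAt_th (t₀ : ℝ) (p : Euc N × ℝ) : DifferentiableAt ℝ (th t₀) p :=
  (sm_th (s := univ) t₀).differentiableAt isOpen_univ (mem_univ p)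

lemma diffAt_coordsub (i : Fin N) (c : ℝ) (p : Euc N × ℝ) :
    DifferentiableAt ℝ (fun q : Euc N × ℝ => q.1 i - c) p :=
  ((sm_coord (s := (univ : Set (Euc N × ℝ))) i).sub (Sm.const c)).differentiableAt
    isOpen_univ (mem_univ p)

lemma pd_coordsub (i : Fin N) (c : ℝ) (z : Euc N × ℝ) (p : Euc N × ℝ) :
    pd z (fun q : Euc N × ℝ => q.1 i - c) p = z.1 i := by
  rw [pd_sub ((sm_coord (s := (univ : Set (Euc N × ℝ))) i).differentiableAt
    isOpen_univ (mem_univ p)) (differentiableAt_const c), pd_coord, pd_const, sub_zero]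

lemma pd_qf (x₀ : Euc N) (z : Euc N × ℝ) (p : Euc N × ℝ) :
    pd z (qf x₀) p = ∑ i, 2 * (p.1 i - x₀ i) * z.1 i := by
  have h1 : pd z (qf x₀) p = ∑ i, pd z (fun q : Euc N × ℝ => (q.1 i - x₀ i) ^ 2) p :=
    pd_sum (fun i _ => (diffAt_coordsub i (x₀ i) p).pow 2) z
  rw [h1]
  refine Finset.sum_congr rfl fun i _ => ?_
  rw [pd_sq (diffAt_coordsub i (x₀ i) p) z, pd_coordsub]

lemma dx_qf (x₀ : Euc N) (j : Fin N) (p : Euc N × ℝ) :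
    Dx j (qf x₀) p = 2 * (p.1 j - x₀ j) := by
  rw [show Dx j (qf x₀) p = pd (ee N j, (0:ℝ)) (qf x₀) p from rfl, pd_qf]
  rw [Finset.sum_eq_single j]
  · simp [ee_apply]
  · intro i _ hij
    simp [ee_apply, hij]
  · simp

lemma dt_qf (x₀ : Euc N) (p : Euc N × ℝ) : Dtm (qf x₀) p = 0 := by
  rw [show Dtm (qf x₀) p = pd ((0 : Euc N), (1:ℝ)) (qf x₀) p from rfl, pd_qf]
  simp

lemma pd_phf_gen (x₀ : Euc N) (z : Euc N × ℝ) (p : Euc N × ℝ) :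
    pd z (phf x₀) p = -2 * (1 - qf x₀ p) * pd z (qf x₀) p := by
  have h1 : pd z (phf x₀) p
      = 2 * (1 - qf x₀ p) * pd z (fun q => 1 - qf x₀ q) p :=
    pd_sq ((differentiableAt_const 1).sub (diffAt_qf x₀ p)) z
  rw [h1, pd_sub (differentiableAt_const 1) (diffAt_qf x₀ p), pd_const]
  ring

lemma dx_phf (x₀ : Euc N) (j : Fin N) (p : Euc N × ℝ) :
    Dx j (phf x₀) p = -4 * (1 - qf x₀ p) * (p.1 j - x₀ j) := by
  rw [show Dx j (phf x₀) p = pd (ee N j, (0:ℝ)) (phf x₀) p from rfl, pd_phf_gen]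
  rw [show pd (ee N j, (0:ℝ)) (qf x₀) p = Dx j (qf x₀) p from rfl, dx_qf]
  ring

lemma dt_phf (x₀ : Euc N) (p : Euc N × ℝ) : Dtm (phf x₀) p = 0 := by
  rw [show Dtm (phf x₀) p = pd ((0:Euc N), (1:ℝ)) (phf x₀) p from rfl, pd_phf_gen]
  rw [show pd ((0:Euc N), (1:ℝ)) (qf x₀) p = Dtm (qf x₀) p from rfl, dt_qf]
  ring

lemma dx_dx_phf (x₀ : Euc N) (j : Fin N) (p : Euc N × ℝ) :
    Dx j (Dx j (phf x₀)) p = -4 * (1 - qf x₀ p) + 8 * (p.1 j - x₀ j) ^ 2 := by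
  have hfun : Dx j (phf x₀) = fun q => (-4 * (1 - qf x₀ q)) * (q.1 j - x₀ j) := by
    funext q
    rw [dx_phf]
  rw [show Dx j (Dx j (phf x₀)) p = pd (ee N j, (0:ℝ)) (Dx j (phf x₀)) p from rfl, hfun]
  have hd1 : DifferentiableAt ℝ (fun q : Euc N × ℝ => -4 * (1 - qf x₀ q)) p :=
    (differentiableAt_const (-4)).mul ((differentiableAt_const 1).sub (diffAt_qf x₀ p))
  rw [pd_mul hd1 (diffAt_coordsub j (x₀ j) p), pd_coordsub]
  have h2 : pd (ee N j, (0:ℝ)) (fun q : Euc N × ℝ => -4 * (1 - qf x₀ q)) p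
      = -4 * (0 - Dx j (qf x₀) p) := by
    rw [pd_const_mul ((differentiableAt_const 1).fun_sub (diffAt_qf x₀ p)) (-4),
      pd_sub (differentiableAt_const 1) (diffAt_qf x₀ p), pd_const]
    rfl
  rw [h2, dx_qf]
  have h3 : ((ee N j, (0:ℝ)) : Euc N × ℝ).1 j = 1 := by simp [ee_apply]
  rw [h3]
  ring

lemma pd_th (t₀ : ℝ) (z : Euc N × ℝ) (p : Euc N × ℝ) : pd z (th t₀) p = z.2 := by
  show pd z (fun q : Euc N × ℝ => q.2 - t₀) p = z.2
  rw [pd_sub ((sm_time (s := (univ : Set (Euc N × ℝ)))).differentiableAt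
    isOpen_univ (mem_univ p)) (differentiableAt_const t₀), pd_time, pd_const, sub_zero]

lemma dx_th (t₀ : ℝ) (j : Fin N) (p : Euc N × ℝ) : Dx j (th t₀) p = 0 := by
  rw [show Dx j (th t₀) p = pd (ee N j, (0:ℝ)) (th t₀) p from rfl, pd_th]

lemma dt_th (t₀ : ℝ) (p : Euc N × ℝ) : Dtm (th t₀) p = 1 := by
  rw [show Dtm (th t₀) p = pd ((0:Euc N), (1:ℝ)) (th t₀) p from rfl, pd_th]

lemma qf_eq_dist (x₀ : Euc N) (p : Euc N × ℝ) : qf x₀ p = (dist p.1 x₀) ^ 2 := by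
  rw [EuclideanSpace.dist_eq, Real.sq_sqrt (by positivity)]
  refine Finset.sum_congr rfl fun i _ => ?_
  rw [Real.dist_eq, sq_abs]

lemma qf_nonneg (x₀ : Euc N) (p : Euc N × ℝ) : 0 ≤ qf x₀ p := by
  rw [qf]; positivity

end AC

namespace AC
variable {N : ℕ}

noncomputable def Pf (x₀ : Euc N) (t₀ A : ℝ) (V : Euc N × ℝ → ℝ) : Euc N × ℝ → ℝ :=
  fun p => phf x₀ p * th t₀ p * Wf V p + A * (V p) ^ 2

noncomputable def Qf (x₀ : Euc N) (t₀ A c : ℝ) (V : Euc N × ℝ → ℝ) : Euc N × ℝ → ℝ :=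
  fun p => Pf x₀ t₀ A V p - c * th t₀ p

lemma sm_Pf {Ω : Set (Euc N × ℝ)} (hΩ : IsOpen Ω) {V : Euc N × ℝ → ℝ} (hV : Sm Ω V)
    (x₀ : Euc N) (t₀ A : ℝ) : Sm Ω (Pf x₀ t₀ A V) :=
  (((sm_phf x₀).mul (sm_th t₀)).mul (sm_wf hΩ hV)).add ((Sm.const A).mul hV.sq)

lemma sm_Qf {Ω : Set (Euc N × ℝ)} (hΩ : IsOpen Ω) {V : Euc N × ℝ → ℝ} (hV : Sm Ω V)
    (x₀ : Euc N) (t₀ A c : ℝ) : Sm Ω (Qf x₀ t₀ A c V) :=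
  (sm_Pf hΩ hV x₀ t₀ A).sub ((Sm.const c).mul (sm_th t₀))

lemma pd_Pf {Ω : Set (Euc N × ℝ)} (hΩ : IsOpen Ω) {V : Euc N × ℝ → ℝ} (hV : Sm Ω V)
    (x₀ : Euc N) (t₀ A : ℝ) (z : Euc N × ℝ) {p : Euc N × ℝ} (hp : p ∈ Ω) :
    pd z (Pf x₀ t₀ A V) p
      = (pd z (phf x₀) p * th t₀ p + phf x₀ p * pd z (th t₀) p) * Wf V p
        + phf x₀ p * th t₀ p * pd z (Wf V) p
        + A * (2 * V p * pd z V p) := by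
  have hφ : DifferentiableAt ℝ (phf x₀) p := diffAt_phf x₀ p
  have hth : DifferentiableAt ℝ (th t₀) p := diffAt_th t₀ p
  have hW : DifferentiableAt ℝ (Wf V) p := (sm_wf hΩ hV).differentiableAt hΩ hp
  have hdV : DifferentiableAt ℝ V p := hV.differentiableAt hΩ hp
  have h1 : pd z (Pf x₀ t₀ A V) p
      = pd z (fun q => phf x₀ q * th t₀ q * Wf V q) p
        + pd z (fun q => A * (V q) ^ 2) p :=
    pd_add ((hφ.mul hth).mul hW) ((differentiableAt_const A).mul (hdV.pow 2)) z
  have h2 : pd z (fun q => phf x₀ q * th t₀ q * Wf V q) p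
      = pd z (fun q => phf x₀ q * th t₀ q) p * Wf V p
        + phf x₀ p * th t₀ p * pd z (Wf V) p :=
    pd_mul (hφ.mul hth) hW z
  have h3 : pd z (fun q => phf x₀ q * th t₀ q) p
      = pd z (phf x₀) p * th t₀ p + phf x₀ p * pd z (th t₀) p :=
    pd_mul hφ hth z
  have h4 : pd z (fun q => A * (V q) ^ 2) p = A * pd z (fun q => (V q) ^ 2) p :=
    pd_const_mul (hdV.pow 2) A z
  have h5 : pd z (fun q => (V q) ^ 2) p = 2 * V p * pd z V p := pd_sq hdV z
  rw [h1, h2, h3, h4, h5]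

lemma dtm_Pf {Ω : Set (Euc N × ℝ)} (hΩ : IsOpen Ω) {V : Euc N × ℝ → ℝ} (hV : Sm Ω V)
    (x₀ : Euc N) (t₀ A : ℝ) {p : Euc N × ℝ} (hp : p ∈ Ω) :
    Dtm (Pf x₀ t₀ A V) p
      = phf x₀ p * Wf V p + phf x₀ p * th t₀ p * Dtm (Wf V) p
        + 2 * A * V p * Dtm V p := by
  have h := pd_Pf hΩ hV x₀ t₀ A ((0 : Euc N), (1:ℝ)) hp
  rw [show Dtm (Pf x₀ t₀ A V) p = pd ((0:Euc N), (1:ℝ)) (Pf x₀ t₀ A V) p from rfl, h,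
    show pd ((0:Euc N), (1:ℝ)) (phf x₀) p = Dtm (phf x₀) p from rfl,
    show pd ((0:Euc N), (1:ℝ)) (th t₀) p = Dtm (th t₀) p from rfl,
    show pd ((0:Euc N), (1:ℝ)) (Wf V) p = Dtm (Wf V) p from rfl,
    show pd ((0:Euc N), (1:ℝ)) V p = Dtm V p from rfl,
    dt_phf, dt_th]
  ring

lemma dx_Pf {Ω : Set (Euc N × ℝ)} (hΩ : IsOpen Ω) {V : Euc N × ℝ → ℝ} (hV : Sm Ω V)
    (x₀ : Euc N) (t₀ A : ℝ) (i : Fin N) {p : Euc N × ℝ} (hp : p ∈ Ω) :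
    Dx i (Pf x₀ t₀ A V) p
      = Dx i (phf x₀) p * th t₀ p * Wf V p
        + phf x₀ p * th t₀ p * Dx i (Wf V) p
        + 2 * A * (V p * Dx i V p) := by
  have h := pd_Pf hΩ hV x₀ t₀ A (ee N i, (0:ℝ)) hp
  rw [show Dx i (Pf x₀ t₀ A V) p = pd (ee N i, (0:ℝ)) (Pf x₀ t₀ A V) p from rfl, h, pd_th]
  show (Dx i (phf x₀) p * th t₀ p + phf x₀ p * ((ee N i, (0:ℝ)) : Euc N × ℝ).2) * Wf V p
      + _ + A * (2 * V p * Dx i V p) = _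
  show (Dx i (phf x₀) p * th t₀ p + phf x₀ p * (0:ℝ)) * Wf V p
      + phf x₀ p * th t₀ p * Dx i (Wf V) p + A * (2 * V p * Dx i V p) = _
  ring

lemma lapJ_Pf {Ω : Set (Euc N × ℝ)} (hΩ : IsOpen Ω) {V : Euc N × ℝ → ℝ} (hV : Sm Ω V)
    (x₀ : Euc N) (t₀ A : ℝ) {p : Euc N × ℝ} (hp : p ∈ Ω) :
    lapJ (Pf x₀ t₀ A V) p
      = (∑ i, Dx i (Dx i (phf x₀)) p) * th t₀ p * Wf V p
        + 2 * th t₀ p * ∑ i, Dx i (phf x₀) p * Dx i (Wf V) p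
        + phf x₀ p * th t₀ p * lapJ (Wf V) p
        + 2 * A * Wf V p + 2 * A * V p * lapJ V p := by
  have hterm : ∀ i : Fin N, Dx i (Dx i (Pf x₀ t₀ A V)) p
      = Dx i (Dx i (phf x₀)) p * th t₀ p * Wf V p
        + 2 * (Dx i (phf x₀) p * th t₀ p * Dx i (Wf V) p)
        + phf x₀ p * th t₀ p * Dx i (Dx i (Wf V)) p
        + 2 * A * (Dx i V p * Dx i V p)
        + 2 * A * (V p * Dx i (Dx i V) p) := by
    intro i
    have hφ : DifferentiableAt ℝ (phf x₀) p := diffAt_phf x₀ p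
    have hφi : DifferentiableAt ℝ (Dx i (phf x₀)) p :=
      ((sm_phf (s := (univ : Set (Euc N × ℝ))) x₀).pd isOpen_univ _).differentiableAt
        isOpen_univ (mem_univ p)
    have hth : DifferentiableAt ℝ (th t₀) p := diffAt_th t₀ p
    have hW : DifferentiableAt ℝ (Wf V) p := (sm_wf hΩ hV).differentiableAt hΩ hp
    have hWi : DifferentiableAt ℝ (Dx i (Wf V)) p :=
      ((sm_wf hΩ hV).pd hΩ _).differentiableAt hΩ hp
    have hdV : DifferentiableAt ℝ V p := hV.differentiableAt hΩ hp
    have hVi : DifferentiableAt ℝ (Dx i V) p := (hV.pd hΩ _).differentiableAt hΩ hp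
    have hcongr : Dx i (Dx i (Pf x₀ t₀ A V)) p
        = pd (ee N i, (0:ℝ)) (fun q =>
            Dx i (phf x₀) q * th t₀ q * Wf V q
            + phf x₀ q * th t₀ q * Dx i (Wf V) q
            + 2 * A * (V q * Dx i V q)) p := by
      apply pd_congr hΩ hp
      intro q hq
      exact dx_Pf hΩ hV x₀ t₀ A i hq
    rw [hcongr]
    have hd1 : DifferentiableAt ℝ (fun q => Dx i (phf x₀) q * th t₀ q * Wf V q) p :=
      (hφi.mul hth).mul hW
    have hd2 : DifferentiableAt ℝ (fun q => phf x₀ q * th t₀ q * Dx i (Wf V) q) p :=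
      (hφ.mul hth).mul hWi
    have hd3 : DifferentiableAt ℝ (fun q => 2 * A * (V q * Dx i V q)) p :=
      (differentiableAt_const (2*A)).mul (hdV.mul hVi)
    have e1 : pd (ee N i, (0:ℝ)) (fun q =>
            Dx i (phf x₀) q * th t₀ q * Wf V q
            + phf x₀ q * th t₀ q * Dx i (Wf V) q
            + 2 * A * (V q * Dx i V q)) p
        = pd (ee N i, (0:ℝ)) (fun q => Dx i (phf x₀) q * th t₀ q * Wf V q) p
          + pd (ee N i, (0:ℝ)) (fun q => phf x₀ q * th t₀ q * Dx i (Wf V) q) p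
          + pd (ee N i, (0:ℝ)) (fun q => 2 * A * (V q * Dx i V q)) p := by
      rw [pd_add (hd1.fun_add hd2) hd3, pd_add hd1 hd2]
    have e2 : pd (ee N i, (0:ℝ)) (fun q => Dx i (phf x₀) q * th t₀ q * Wf V q) p
        = (pd (ee N i, (0:ℝ)) (Dx i (phf x₀)) p * th t₀ p
            + Dx i (phf x₀) p * pd (ee N i, (0:ℝ)) (th t₀) p) * Wf V p
          + Dx i (phf x₀) p * th t₀ p * pd (ee N i, (0:ℝ)) (Wf V) p := by
      rw [pd_mul (hφi.fun_mul hth) hW, pd_mul hφi hth]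
    have e3 : pd (ee N i, (0:ℝ)) (fun q => phf x₀ q * th t₀ q * Dx i (Wf V) q) p
        = (pd (ee N i, (0:ℝ)) (phf x₀) p * th t₀ p
            + phf x₀ p * pd (ee N i, (0:ℝ)) (th t₀) p) * Dx i (Wf V) p
          + phf x₀ p * th t₀ p * pd (ee N i, (0:ℝ)) (Dx i (Wf V)) p := by
      rw [pd_mul (hφ.fun_mul hth) hWi, pd_mul hφ hth]
    have e4 : pd (ee N i, (0:ℝ)) (fun q => 2 * A * (V q * Dx i V q)) p
        = 2 * A * (pd (ee N i, (0:ℝ)) V p * Dx i V p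
            + V p * pd (ee N i, (0:ℝ)) (Dx i V) p) := by
      rw [pd_const_mul (hdV.fun_mul hVi) (2*A) _, pd_mul hdV hVi]
    rw [e1, e2, e3, e4, pd_th]
    show (Dx i (Dx i (phf x₀)) p * th t₀ p + Dx i (phf x₀) p * (0:ℝ)) * Wf V p
          + Dx i (phf x₀) p * th t₀ p * Dx i (Wf V) p
        + ((Dx i (phf x₀) p * th t₀ p + phf x₀ p * (0:ℝ)) * Dx i (Wf V) p
          + phf x₀ p * th t₀ p * Dx i (Dx i (Wf V)) p)
        + 2 * A * (Dx i V p * Dx i V p + V p * Dx i (Dx i V) p) = _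
    ring
  have h7 : lapJ (Pf x₀ t₀ A V) p = ∑ i, Dx i (Dx i (Pf x₀ t₀ A V)) p := rfl
  have h8 : lapJ (Wf V) p = ∑ i, Dx i (Dx i (Wf V)) p := rfl
  have h9 : lapJ V p = ∑ i, Dx i (Dx i V) p := rfl
  have h10 : Wf V p = ∑ i, (Dx i V p) ^ 2 := rfl
  rw [h7, Finset.sum_congr rfl fun i _ => hterm i]
  simp only [Finset.sum_add_distrib]
  have hT1 : ∑ i : Fin N, Dx i (Dx i (phf x₀)) p * th t₀ p * Wf V p
      = (∑ i, Dx i (Dx i (phf x₀)) p) * th t₀ p * Wf V p := by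
    rw [Finset.sum_mul, Finset.sum_mul]
  have hT2 : ∑ i : Fin N, 2 * (Dx i (phf x₀) p * th t₀ p * Dx i (Wf V) p)
      = 2 * th t₀ p * ∑ i, Dx i (phf x₀) p * Dx i (Wf V) p := by
    rw [Finset.mul_sum]
    exact Finset.sum_congr rfl fun i _ => by ring
  have hT3 : ∑ i : Fin N, phf x₀ p * th t₀ p * Dx i (Dx i (Wf V)) p
      = phf x₀ p * th t₀ p * lapJ (Wf V) p := by
    rw [h8, Finset.mul_sum]
  have hT4 : ∑ i : Fin N, 2 * A * (Dx i V p * Dx i V p) = 2 * A * Wf V p := by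
    rw [h10, Finset.mul_sum]
    exact Finset.sum_congr rfl fun i _ => by ring
  have hT5 : ∑ i : Fin N, 2 * A * (V p * Dx i (Dx i V) p) = 2 * A * V p * lapJ V p := by
    rw [h9, Finset.mul_sum]
    exact Finset.sum_congr rfl fun i _ => by ring
  rw [hT1, hT2, hT3, hT4, hT5]

end AC

namespace AC

/-- elementary: from `x² ≥ y²`, `x ≥ 0` conclude `y ≤ x` -/
lemma le_of_sq_le_sq' {x y : ℝ} (h : y^2 ≤ x^2) (hx : 0 ≤ x) : y ≤ x := by
  have h1 : y ≤ |y| := le_abs_self y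
  have h2 : |y| = Real.sqrt (y^2) := (Real.sqrt_sq_eq_abs y).symm
  have h3 : Real.sqrt (y^2) ≤ Real.sqrt (x^2) := Real.sqrt_le_sqrt h
  have h4 : Real.sqrt (x^2) = x := by
    rw [Real.sqrt_sq hx]
  linarith

lemma key_ineq {N : ℕ} {T : ℝ} {v : Euc N → ℝ → ℝ} {g : ℝ → ℝ}
    (hV : Sm (univ ×ˢ Ioo (0:ℝ) T) (fun p : Euc N × ℝ => v p.1 p.2))
    (hg : ContDiff ℝ ((⊤ : ℕ∞) : WithTop ℕ∞) g)
    (heq : ∀ (x : Euc N), ∀ t ∈ Ioo (0:ℝ) T,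
      deriv (fun s => v x s) t = lap (fun y => v y t) x - g (v x t))
    {k₀ M L : ℝ}
    (hbd : ∀ (x : Euc N), ∀ t ∈ Ioo (0:ℝ) T, |v x t| ≤ k₀)
    (hM : ∀ r : ℝ, |r| ≤ k₀ → |g r| ≤ M)
    (hL : ∀ r : ℝ, |r| ≤ k₀ → |deriv g r| ≤ L)
    {h : ℝ} (hh0 : 0 < h) (hh1 : h ≤ 1)
    (x₀ : Euc N) {t₀ A : ℝ} (hA : A = 21 + 2*N + h*L)
    {p : Euc N × ℝ} (hp : p ∈ (univ ×ˢ Ioo (0:ℝ) T : Set (Euc N × ℝ)))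
    (hq1 : qf x₀ p ≤ 1) (hθ0 : 0 < th t₀ p) (hθh : th t₀ p ≤ h) :
    Dtm (Pf x₀ t₀ A (fun p : Euc N × ℝ => v p.1 p.2)) p
      - lapJ (Pf x₀ t₀ A (fun p : Euc N × ℝ => v p.1 p.2)) p ≤ 2 * A * k₀ * M := by
  have hΩ : IsOpen (univ ×ˢ Ioo (0:ℝ) T : Set (Euc N × ℝ)) := isOpen_univ.prod isOpen_Ioo
  set V : Euc N × ℝ → ℝ := fun p => v p.1 p.2 with hVdef
  -- abbreviations
  set q : ℝ := qf x₀ p with hqdef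
  set θ : ℝ := th t₀ p with hθdef
  set W : ℝ := Wf V p with hWdef
  set S : ℝ := S2f V p with hSdef
  set u : ℝ := V p with hudef
  have hφdef : phf x₀ p = (1 - q)^2 := rfl
  have hW0 : 0 ≤ W := by
    rw [hWdef]
    exact Finset.sum_nonneg fun i _ => sq_nonneg _
  have hS0 : 0 ≤ S := by
    rw [hSdef]
    exact Finset.sum_nonneg fun i _ => Finset.sum_nonneg fun j _ => sq_nonneg _
  have hq0 : 0 ≤ q := qf_nonneg x₀ p
  have hu : |u| ≤ k₀ := hbd p.1 p.2 hp.2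
  -- structure identities
  have hDt := dtm_Pf hΩ hV x₀ t₀ A hp
  have hLap := lapJ_Pf hΩ hV x₀ t₀ A hp
  have hHeatW : Dtm (Wf V) p - lapJ (Wf V) p = -2 * S - 2 * deriv g u * W :=
    heat_op_Wf hV hg heq hp
  have hPDE : Dtm V p = lapJ V p - g u := pde_joint hV heq hp
  -- second derivatives of the cutoff
  set sphi : ℝ := ∑ i, Dx i (Dx i (phf x₀)) p with hsphidef
  have hsphi : sphi = -4*N*(1-q) + 8*q := by
    rw [hsphidef, Finset.sum_congr rfl fun i _ => dx_dx_phf x₀ i p,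
      Finset.sum_add_distrib, Finset.sum_const, ← Finset.mul_sum]
    simp only [Finset.card_univ, Fintype.card_fin, nsmul_eq_mul]
    rw [hqdef, show qf x₀ p = ∑ i, (p.1 i - x₀ i)^2 from rfl]
    ring
  -- the cross term
  set y : Fin N → ℝ := fun i => p.1 i - x₀ i with hydef
  set b : Fin N → ℝ := fun j => Dx j V p with hbdef
  set c2 : Fin N → Fin N → ℝ := fun i j => Dx i (Dx j V) p with hc2def
  set Sg : ℝ := ∑ i, ∑ j, y i * b j * c2 i j with hSgdef
  set C : ℝ := ∑ i, Dx i (phf x₀) p * Dx i (Wf V) p with hCdef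
  have hDxW : ∀ i : Fin N, Dx i (Wf V) p = 2 * ∑ j, b j * c2 i j := by
    intro i
    have h0 := pd_Wf hΩ hV (ee N i, (0:ℝ)) hp
    rw [show Dx i (Wf V) p = pd (ee N i, (0:ℝ)) (Wf V) p from rfl, h0]
    rfl
  have hCval : C = -8 * (1-q) * Sg := by
    rw [hCdef]
    have hterm : ∀ i : Fin N, Dx i (phf x₀) p * Dx i (Wf V) p
        = -8 * (1-q) * ∑ j, y i * b j * c2 i j := by
      intro i
      rw [dx_phf x₀ i p, hDxW i, Finset.mul_sum, Finset.mul_sum]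
      rw [show qf x₀ p = q from rfl]
      rw [Finset.mul_sum]
      refine Finset.sum_congr rfl fun j _ => ?_
      rw [hydef]
      ring
    rw [Finset.sum_congr rfl fun i _ => hterm i, ← Finset.mul_sum, hSgdef]
  -- Cauchy-Schwarz
  have hCS : Sg^2 ≤ q * W * S := by
    have hcs := Finset.sum_mul_sq_le_sq_mul_sq (Finset.univ : Finset (Fin N × Fin N))
      (fun r => y r.1 * b r.2) (fun r => c2 r.1 r.2)
    rw [Fintype.sum_prod_type, Fintype.sum_prod_type, Fintype.sum_prod_type] at hcs
    have e1 : ∑ i : Fin N, ∑ j : Fin N, (y i * b j) * (c2 i j) = Sg := by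
      rw [hSgdef]
    have e2 : (∑ i : Fin N, ∑ j : Fin N, (y i * b j)^2) = q * W := by
      have hmp : ∀ i j : Fin N, (y i * b j)^2 = (y i)^2 * (b j)^2 := fun i j => mul_pow _ _ _
      rw [Finset.sum_congr rfl fun i _ => Finset.sum_congr rfl fun j _ => hmp i j]
      rw [← Finset.sum_mul_sum]
      rfl
    have e3 : (∑ i : Fin N, ∑ j : Fin N, (c2 i j)^2) = S := rfl
    rw [e1, e2, e3] at hcs
    exact hcs
  -- master expression
  have key : Dtm (Pf x₀ t₀ A V) p - lapJ (Pf x₀ t₀ A V) p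
      = (1-q)^2 * W - 2 * (1-q)^2 * θ * S - 2 * (1-q)^2 * θ * (deriv g u) * W
        - 2 * A * u * (g u) - sphi * θ * W - 2 * θ * C - 2 * A * W := by
    rw [hDt, hLap]
    have h1 : Dtm (Wf V) p = lapJ (Wf V) p - 2 * S - 2 * deriv g u * W := by
      linarith [hHeatW]
    rw [h1, hPDE, hφdef]
    rw [← hθdef, ← hWdef, ← hudef]
    ring
  -- from now on everything is opaque real arithmetic
  clear_value C Sg c2 b y sphi u S W θ q V
  rw [key]
  have hgu : |g u| ≤ M := hM u hu
  have hgu' : |deriv g u| ≤ L := hL u hu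
  clear key hDt hLap hHeatW hPDE hDxW hsphidef hqdef hθdef hWdef hSdef hudef
    hydef hbdef hc2def hSgdef hCdef hφdef heq hbd hM hL hV hVdef hΩ hp hg
  have hk₀0 : 0 ≤ k₀ := le_trans (abs_nonneg u) hu
  have hM0 : 0 ≤ M := le_trans (abs_nonneg _) hgu
  have hL0 : 0 ≤ L := le_trans (abs_nonneg _) hgu'
  have hA0 : 0 ≤ A := by
    rw [hA]
    have : (0:ℝ) ≤ h * L := mul_nonneg hh0.le hL0
    positivity
  have hθ1 : θ ≤ 1 := le_trans hθh hh1
  have hSg2 : Sg^2 ≤ W * S := by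
    have hws : q * W * S ≤ W * S := by nlinarith [mul_nonneg hW0 hS0]
    linarith
  have c1 : 16 * (1-q) * Sg ≤ 2 * (1-q)^2 * S + 32 * W := by
    have ha0 : 0 ≤ 1 - q := by linarith
    have hx0 : 0 ≤ 2 * (1-q)^2 * S + 32 * W := by positivity
    have hsq : (16 * (1-q) * Sg)^2 ≤ (2 * (1-q)^2 * S + 32 * W)^2 := by
      nlinarith [mul_le_mul_of_nonneg_left hSg2 (by positivity : (0:ℝ) ≤ 256 * (1-q)^2),
        sq_nonneg (2 * (1-q)^2 * S - 32 * W)]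
    exact le_of_sq_le_sq' hsq hx0
  -- term bounds
  have hφ0 : 0 ≤ (1-q)^2 := sq_nonneg _
  have hφ1 : (1-q)^2 ≤ 1 := by nlinarith
  have b1 : (1-q)^2 * W ≤ W := by nlinarith
  have b3 : -(2 * (1-q)^2 * θ * (deriv g u) * W) ≤ 2 * h * L * W := by
    have h2 : 0 ≤ (1-q)^2 * θ * W := by positivity
    have h3 : (1-q)^2 * θ * W ≤ h * W := by nlinarith
    have h4 := mul_le_mul_of_nonneg_right (abs_le.mp hgu').1 h2
    have h5 := mul_le_mul_of_nonneg_left h3 hL0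
    set D : ℝ := deriv g u with hD
    clear_value D
    nlinarith [h4, h5]
  have b4 : -(2 * A * u * (g u)) ≤ 2 * A * k₀ * M := by
    have h1 : |u * g u| ≤ k₀ * M := by
      rw [abs_mul]
      exact mul_le_mul hu hgu (abs_nonneg _) hk₀0
    have h2 := abs_le.mp h1
    nlinarith [h2.1, h2.2]
  have b5 : -(sphi * θ * W) ≤ (4*N + 8) * W := by
    have hm : (0:ℝ) ≤ (4*N + 8) + sphi * θ := by
      rw [hsphi]
      nlinarith [mul_nonneg (mul_nonneg (by positivity : (0:ℝ) ≤ 4*(N:ℝ)) hq0) hθ0.le]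
    nlinarith [mul_nonneg hW0 hm]
  have b6 : -(2 * θ * C) - 2 * (1-q)^2 * θ * S ≤ 32 * W := by
    rw [hCval]
    have h1 := mul_le_mul_of_nonneg_left c1 hθ0.le
    nlinarith [mul_nonneg hW0 hθ0.le]
  -- coefficient bookkeeping
  have hc : 2*h*L*W + (4*(N:ℝ)+8)*W + 33*W = 2*A*W - W := by
    rw [hA]; ring
  linarith [b1, b3, b4, b5, b6, hW0, hc]

end AC

namespace AC

lemma bernstein {N : ℕ} {T : ℝ} {v : Euc N → ℝ → ℝ} {g : ℝ → ℝ}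
    (hV : Sm (univ ×ˢ Ioo (0:ℝ) T) (fun p : Euc N × ℝ => v p.1 p.2))
    (hg : ContDiff ℝ ((⊤ : ℕ∞) : WithTop ℕ∞) g)
    (heq : ∀ (x : Euc N), ∀ t ∈ Ioo (0:ℝ) T,
      deriv (fun s => v x s) t = lap (fun y => v y t) x - g (v x t))
    {k₀ M L : ℝ}
    (hbd : ∀ (x : Euc N), ∀ t ∈ Ioo (0:ℝ) T, |v x t| ≤ k₀)
    (hM : ∀ r : ℝ, |r| ≤ k₀ → |g r| ≤ M)
    (hL : ∀ r : ℝ, |r| ≤ k₀ → |deriv g r| ≤ L)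
    {h t : ℝ} (hh0 : 0 < h) (hh1 : h ≤ 1) (ht : t ∈ Ioo (0:ℝ) T) (hth : h < t)
    (x₀ : Euc N) :
    ‖gradient (fun y => v y t) x₀‖^2 ≤ (21 + 2*N + h*L) * (k₀^2/h + 2*k₀*M) := by
  have hΩ : IsOpen (univ ×ˢ Ioo (0:ℝ) T : Set (Euc N × ℝ)) := isOpen_univ.prod isOpen_Ioo
  set V : Euc N × ℝ → ℝ := fun p => v p.1 p.2 with hVdef
  set A : ℝ := 21 + 2*N + h*L with hA
  set t₀ : ℝ := t - h with ht₀
  set C₃ : ℝ := 2*A*k₀*M with hC₃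
  have ht0pos : 0 < t₀ := by rw [ht₀]; linarith
  have httop : t < T := ht.2
  have hk₀0 : 0 ≤ k₀ := le_trans (abs_nonneg _) (hbd x₀ t ht)
  have hM0 : 0 ≤ M := le_trans (abs_nonneg _) (hM 0 (by simpa using hk₀0))
  have hL0 : 0 ≤ L := le_trans (abs_nonneg _) (hL 0 (by simpa using hk₀0))
  have hA0 : 0 ≤ A := by
    rw [hA]
    have : (0:ℝ) ≤ h * L := mul_nonneg hh0.le hL0
    positivity
  have hC₃0 : 0 ≤ C₃ := by rw [hC₃]; positivity
  -- the compact cylinder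
  set K : Set (Euc N × ℝ) := Metric.closedBall x₀ 1 ×ˢ Icc t₀ t with hK
  have hKsub : K ⊆ (univ ×ˢ Ioo (0:ℝ) T : Set (Euc N × ℝ)) := by
    rintro ⟨y, s⟩ ⟨hy, hs⟩
    exact ⟨mem_univ _, lt_of_lt_of_le ht0pos hs.1, lt_of_le_of_lt hs.2 httop⟩
  have hKcomp : IsCompact K := (isCompact_closedBall x₀ 1).prod isCompact_Icc
  have hx₀t : ((x₀, t) : Euc N × ℝ) ∈ K :=
    ⟨Metric.mem_closedBall_self (by norm_num), ⟨by rw [ht₀]; linarith, le_refl t⟩⟩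
  have hubd : ∀ p : Euc N × ℝ, p ∈ K → |V p| ≤ k₀ := fun p hp => hbd p.1 p.2 (hKsub hp).2
  -- main estimate via the maximum principle
  have hmain : ∀ δ > (0:ℝ), Pf x₀ t₀ A V (x₀, t) ≤ A*k₀^2 + (C₃+δ)*h := by
    intro δ hδ
    set c : ℝ := C₃ + δ with hc
    set Q : Euc N × ℝ → ℝ := Qf x₀ t₀ A c V with hQ
    have hsmQ : Sm (univ ×ˢ Ioo (0:ℝ) T) Q := sm_Qf hΩ hV x₀ t₀ A c
    have hQcont : ContinuousOn Q K := (hsmQ.continuousOn).mono hKsub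
    obtain ⟨⟨ym, sm⟩, hmemK, hmax⟩ := hKcomp.exists_isMaxOn ⟨_, hx₀t⟩ hQcont
    have hym : ym ∈ Metric.closedBall x₀ 1 := hmemK.1
    have hsm : sm ∈ Icc t₀ t := hmemK.2
    have pmem : ((ym, sm) : Euc N × ℝ) ∈ (univ ×ˢ Ioo (0:ℝ) T : Set (Euc N × ℝ)) :=
      hKsub hmemK
    -- the max value is at most A k₀²
    have hQmax : Q (ym, sm) ≤ A * k₀^2 := by
      have husq : A * (V (ym, sm))^2 ≤ A * k₀^2 := by
        have h1 := abs_le.mp (hubd _ hmemK)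
        have h2 : (V (ym, sm))^2 ≤ k₀^2 := sq_le_sq' h1.1 h1.2
        exact mul_le_mul_of_nonneg_left h2 hA0
      by_cases hint : t₀ < sm ∧ dist ym x₀ < 1
      · -- interior maximum: contradiction with the key inequality
        exfalso
        have hθ0 : 0 < th t₀ (ym, sm) := by
          show 0 < sm - t₀
          linarith [hint.1]
        have hθh : th t₀ (ym, sm) ≤ h := by
          show sm - t₀ ≤ h
          rw [ht₀] at hsm ⊢
          linarith [hsm.2]
        have hq1 : qf x₀ (ym, sm) ≤ 1 := by
          rw [qf_eq_dist]
          have : dist ((ym, sm) : Euc N × ℝ).1 x₀ ≤ 1 := hym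
          nlinarith [dist_nonneg (x := ((ym, sm) : Euc N × ℝ).1) (y := x₀)]
        have hkey := key_ineq hV hg heq hbd hM hL hh0 hh1 x₀ hA pmem hq1 hθ0 hθh
        -- time derivative of Q is nonneg at the max
        have hdiffPf : DifferentiableAt ℝ (Pf x₀ t₀ A V) (ym, sm) :=
          (sm_Pf hΩ hV x₀ t₀ A).differentiableAt hΩ pmem
        have hQt : Dtm Q (ym, sm) = Dtm (Pf x₀ t₀ A V) (ym, sm) - c := by
          have e1 : Dtm Q (ym, sm)
              = Dtm (Pf x₀ t₀ A V) (ym, sm) - pd ((0:Euc N), (1:ℝ)) (fun q => c * th t₀ q) (ym, sm) :=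
            pd_sub hdiffPf ((differentiableAt_const c).mul (diffAt_th t₀ _)) _
          have e2 : pd ((0:Euc N), (1:ℝ)) (fun q => c * th t₀ q) (ym, sm)
              = c * Dtm (th t₀) (ym, sm) := pd_const_mul (diffAt_th t₀ _) c _
          rw [e1, e2, dt_th, mul_one]
        have htime : 0 ≤ Dtm Q (ym, sm) := by
          have hd := slice_hasDerivAt Q ym sm (hsmQ.differentiableAt hΩ pmem)
          refine deriv_nonneg_at_max hint.1 hsm.2 ?_ hd
          intro σ hσ
          exact hmax (⟨hym, hσ⟩ : ((ym, σ) : Euc N × ℝ) ∈ K)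
        -- spatial Laplacian of Q is nonpos at the max
        have hlocmax : IsLocalMax (fun y => Q (y, sm)) ym := by
          have hball : Metric.ball x₀ 1 ∈ 𝓝 ym := Metric.isOpen_ball.mem_nhds hint.2
          filter_upwards [hball] with y hy
          exact hmax (⟨Metric.ball_subset_closedBall hy, hsm⟩ : ((y, sm) : Euc N × ℝ) ∈ K)
        have hlapQ : ∀ i : Fin N, Dx i (Dx i Q) (ym, sm) ≤ 0 := fun i =>
          pd2_nonpos_at_localmax hΩ hsmQ pmem hlocmax i
        have hQxx : ∀ i : Fin N, Dx i (Dx i Q) (ym, sm) = Dx i (Dx i (Pf x₀ t₀ A V)) (ym, sm) := by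
          intro i
          apply pd_congr hΩ pmem
          intro q hq
          have hdiffPfq : DifferentiableAt ℝ (Pf x₀ t₀ A V) q :=
            (sm_Pf hΩ hV x₀ t₀ A).differentiableAt hΩ hq
          have e1 : Dx i Q q
              = Dx i (Pf x₀ t₀ A V) q - pd (ee N i, (0:ℝ)) (fun q' => c * th t₀ q') q :=
            pd_sub hdiffPfq ((differentiableAt_const c).mul (diffAt_th t₀ _)) _
          have e2 : pd (ee N i, (0:ℝ)) (fun q' => c * th t₀ q') q
              = c * Dx i (th t₀) q := pd_const_mul (diffAt_th t₀ _) c _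
          rw [e1, e2, dx_th, mul_zero, sub_zero]
        have hlapPf : lapJ (Pf x₀ t₀ A V) (ym, sm) ≤ 0 := by
          have : lapJ (Pf x₀ t₀ A V) (ym, sm) = ∑ i, Dx i (Dx i Q) (ym, sm) := by
            refine Finset.sum_congr rfl fun i _ => (hQxx i).symm
          rw [this]
          exact Finset.sum_nonpos fun i _ => hlapQ i
        rw [hQt] at htime
        rw [hc] at htime
        linarith
      · -- boundary maximum
        push_neg at hint
        have hbval : Pf x₀ t₀ A V (ym, sm) - c * th t₀ (ym, sm) ≤ A * k₀^2 := by
          by_cases hsm0 : t₀ < sm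
          · -- then dist ym x₀ = 1, so the cutoff vanishes
            have hd1 : dist ym x₀ = 1 := le_antisymm hym (hint hsm0)
            have hphf : phf x₀ (ym, sm) = 0 := by
              have : qf x₀ (ym, sm) = 1 := by
                rw [qf_eq_dist]
                show (dist ym x₀)^2 = 1
                rw [hd1]; norm_num
              show (1 - qf x₀ (ym, sm))^2 = 0
              rw [this]; norm_num
            have hθ : 0 ≤ th t₀ (ym, sm) := by
              show 0 ≤ sm - t₀
              linarith [hsm.1]
            have hPval : Pf x₀ t₀ A V (ym, sm) = A * (V (ym, sm))^2 := by
              show phf x₀ (ym, sm) * th t₀ (ym, sm) * Wf V (ym, sm) + A * (V (ym, sm))^2 = _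
              rw [hphf]; ring
            rw [hPval]
            have : 0 ≤ c * th t₀ (ym, sm) := mul_nonneg (by rw [hc]; linarith) hθ
            linarith
          · -- bottom of the cylinder
            have hsmeq : sm = t₀ := le_antisymm (not_lt.mp hsm0) hsm.1
            have hθ : th t₀ (ym, sm) = 0 := by
              show sm - t₀ = 0
              rw [hsmeq]; ring
            have hPval : Pf x₀ t₀ A V (ym, sm) = A * (V (ym, sm))^2 := by
              show phf x₀ (ym, sm) * th t₀ (ym, sm) * Wf V (ym, sm) + A * (V (ym, sm))^2 = _
              rw [hθ]; ring
            rw [hPval, hθ]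
            linarith
        exact hbval
    -- conclude from the maximum
    have hQx₀t : Q (x₀, t) ≤ Q (ym, sm) := hmax hx₀t
    have hQx₀val : Q (x₀, t) = Pf x₀ t₀ A V (x₀, t) - c * h := by
      show Pf x₀ t₀ A V (x₀, t) - c * th t₀ (x₀, t) = _
      have : th t₀ ((x₀, t) : Euc N × ℝ) = h := by
        show t - t₀ = h
        rw [ht₀]; ring
      rw [this]
    rw [hQx₀val] at hQx₀t
    have := le_trans hQx₀t hQmax
    rw [hc] at this ⊢
    linarith
  have hP : Pf x₀ t₀ A V (x₀, t) ≤ A*k₀^2 + C₃*h := by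
    refine le_of_forall_pos_le_add fun ε hε => ?_
    have heq2 : A*k₀^2 + (C₃ + ε/h)*h = A*k₀^2 + C₃*h + ε := by
      field_simp
      ring
    exact le_trans (hmain (ε / h) (by positivity)) heq2.le
  -- unpack the value of P at (x₀, t)
  have hq0 : qf x₀ ((x₀, t) : Euc N × ℝ) = 0 := by
    show (∑ i, (x₀ i - x₀ i)^2) = 0
    simp
  have hφ1 : phf x₀ ((x₀, t) : Euc N × ℝ) = 1 := by
    show (1 - qf x₀ ((x₀, t) : Euc N × ℝ))^2 = 1
    rw [hq0]; norm_num
  have hθval : th t₀ ((x₀, t) : Euc N × ℝ) = h := by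
    show t - t₀ = h
    rw [ht₀]; ring
  have hPval : Pf x₀ t₀ A V (x₀, t) = h * Wf V (x₀, t) + A * (V (x₀, t))^2 := by
    show phf x₀ ((x₀, t) : Euc N × ℝ) * th t₀ ((x₀, t) : Euc N × ℝ) * Wf V (x₀, t)
        + A * (V (x₀, t))^2 = _
    rw [hφ1, hθval]; ring
  rw [hPval] at hP
  -- identify W with the squared gradient norm
  have hmemx₀t : ((x₀, t) : Euc N × ℝ) ∈ (univ ×ˢ Ioo (0:ℝ) T : Set (Euc N × ℝ)) :=
    ⟨mem_univ _, ht⟩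
  have hdV : DifferentiableAt ℝ V (x₀, t) := hV.differentiableAt hΩ hmemx₀t
  have hdslice : DifferentiableAt ℝ (fun y => V (y, t)) x₀ :=
    by have := (hdV.hasFDerivAt.comp x₀ (HasFDerivAt.prodMk (hasFDerivAt_id (𝕜 := ℝ) x₀) (hasFDerivAt_const t x₀))).differentiableAt; exact this
  have hgrad : ‖gradient (fun y => v y t) x₀‖^2 = Wf V (x₀, t) := by
    have h1 := grad_norm_sq (fun y => V (y, t)) x₀ hdslice
    have h2 : ∀ i : Fin N, fderiv ℝ (fun y => V (y, t)) x₀ (ee N i) = Dx i V (x₀, t) :=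
      fun i => slice_fderiv V x₀ t hdV (ee N i)
    rw [show (fun y => v y t) = (fun y => V (y, t)) from rfl, h1,
      Finset.sum_congr rfl fun i _ => by rw [h2 i]]
    rfl
  rw [hgrad]
  have husq : 0 ≤ A * (V (x₀, t))^2 := by positivity
  have hfin : A*(k₀^2/h + 2*k₀*M) = (A*k₀^2 + C₃*h)/h := by
    rw [hC₃]
    field_simp
  rw [hfin, le_div_iff₀ hh0]
  linarith
end AC

/-- interior gradient estimate `‖∇u^ε‖_{L^∞(K)} ≤ k̃/ε` and the resulting
bound `ε ξ^ε ≤ k̃` on `K × (τ,T)`, for uniformly bounded smooth solutions of the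
Allen–Cahn equation on `ℝᴺ × (0,T)`. -/
theorem interior_gradient_estimate
    (N : ℕ) (hN : 1 ≤ N)
    (F f : ℝ → ℝ)
    (hF : ContDiff ℝ (⊤ : ℕ∞) F)
    (hFeven : ∀ x : ℝ, F (-x) = F x)
    (hFpos : ∀ x : ℝ, x ≠ -1 → x ≠ 1 → 0 < F x)
    (hF1 : F 1 = 0) (hFm1 : F (-1) = 0)
    (hfF : f = deriv F)
    (hf0 : f 0 = 0) (hf1 : f 1 = 0) (hfm1 : f (-1) = 0)
    (hfneg : ∀ x ∈ Set.Ioo (0 : ℝ) 1, f x < 0)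
    (hfpos : ∀ x : ℝ, 1 < x → 0 < f x)
    (hdf0 : deriv f 0 < 0) (hdf1 : 0 < deriv f 1) (hdfm1 : 0 < deriv f (-1))
    (hFconv : ∃ α ∈ Set.Ioo (0 : ℝ) 1, ∃ c > 0, ∀ x : ℝ, α ≤ x → c ≤ deriv (deriv F) x)
    (T k₀ : ℝ) (hT : 0 < T) (hk₀ : 0 < k₀)
    (u : ℝ → EuclideanSpace ℝ (Fin N) → ℝ → ℝ)
    (hsmooth : ∀ ε ∈ Set.Ioo (0 : ℝ) 1,
      ContDiffOn ℝ (⊤ : ℕ∞) (fun p : EuclideanSpace ℝ (Fin N) × ℝ => u ε p.1 p.2)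
        (Set.univ ×ˢ Set.Ioo 0 T))
    (hsol : ∀ ε ∈ Set.Ioo (0 : ℝ) 1, ∀ x : EuclideanSpace ℝ (Fin N), ∀ t ∈ Set.Ioo (0 : ℝ) T,
      deriv (fun s => u ε x s) t = lap (fun y => u ε y t) x - f (u ε x t) / ε ^ 2)
    (hbdd : ∀ ε ∈ Set.Ioo (0 : ℝ) 1, ∀ x : EuclideanSpace ℝ (Fin N), ∀ t ∈ Set.Ioo (0 : ℝ) T,
      |u ε x t| ≤ k₀) :
    ∀ K : Set (EuclideanSpace ℝ (Fin N)), IsCompact K → ∀ τ ∈ Set.Ioo (0 : ℝ) T,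
      ∃ k' > (0 : ℝ), ∀ ε ∈ Set.Ioo (0 : ℝ) 1,
        (∀ t ∈ Set.Ioo τ T, ∀ x ∈ K,
          ‖gradient (fun y => u ε y t) x‖ ≤ k' / ε) ∧
        ∀ x ∈ K, ∀ t ∈ Set.Ioo τ T,
          ε * (ε / 2 * ‖gradient (fun y => u ε y t) x‖ ^ 2 - F (u ε x t) / ε) ≤ k' := by
  intro K hK τ hτ
  -- smoothness of f
  have hFinf : ContDiff ℝ ((⊤ : ℕ∞) : WithTop ℕ∞) F := hF.of_le (by simp)
  have hfC : ContDiff ℝ ((⊤ : ℕ∞) : WithTop ℕ∞) f := by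
    rw [hfF]
    exact (contDiff_infty_iff_deriv.mp hFinf).2
  have hfC' : ContDiff ℝ ((⊤ : ℕ∞) : WithTop ℕ∞) (deriv f) :=
    (contDiff_infty_iff_deriv.mp hfC).2
  -- bounds for f and f' on [-k₀, k₀]
  obtain ⟨M₀, hM₀⟩ : ∃ M₀, ∀ r ∈ Icc (-k₀) k₀, ‖f r‖ ≤ M₀ :=
    isCompact_Icc.exists_bound_of_continuousOn hfC.continuous.continuousOn
  obtain ⟨L₀, hL₀⟩ : ∃ L₀, ∀ r ∈ Icc (-k₀) k₀, ‖deriv f r‖ ≤ L₀ :=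
    isCompact_Icc.exists_bound_of_continuousOn hfC'.continuous.continuousOn
  have hM₀' : ∀ r : ℝ, |r| ≤ k₀ → |f r| ≤ M₀ := fun r hr => hM₀ r (abs_le.mp hr)
  have hL₀' : ∀ r : ℝ, |r| ≤ k₀ → |deriv f r| ≤ L₀ := fun r hr => hL₀ r (abs_le.mp hr)
  have hM₀0 : 0 ≤ M₀ := le_trans (abs_nonneg _) (hM₀' 0 (by simp [hk₀.le]))
  have hL₀0 : 0 ≤ L₀ := le_trans (abs_nonneg _) (hL₀' 0 (by simp [hk₀.le]))
  -- the ε-independent constant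
  set D : ℝ := 21 + 2*(N:ℝ) + L₀ with hD
  set B : ℝ := D * (k₀^2 * max (2/τ) 1 + 2*k₀*M₀) + 1 with hB
  have hτ0 : 0 < τ := hτ.1
  have hD0 : 0 ≤ D := by rw [hD]; positivity
  have hmax0 : (0:ℝ) ≤ max (2/τ) 1 := le_trans zero_le_one (le_max_right _ _)
  have hB1 : 1 ≤ B := by
    rw [hB]
    have : 0 ≤ D * (k₀^2 * max (2/τ) 1 + 2*k₀*M₀) := by positivity
    linarith
  have hB0 : 0 < B := lt_of_lt_of_le one_pos hB1
  set k₁ : ℝ := Real.sqrt B with hk₁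
  have hk₁0 : 0 < k₁ := Real.sqrt_pos.mpr hB0
  have hk₁sq : k₁^2 = B := Real.sq_sqrt hB0.le
  refine ⟨max k₁ (B/2), lt_of_lt_of_le hk₁0 (le_max_left _ _), ?_⟩
  intro ε hε
  have hε0 : 0 < ε := hε.1
  have hε1 : ε < 1 := hε.2
  have hε20 : 0 < ε^2 := by positivity
  -- the gradient bound squared, at every point of the slab
  have hgradsq : ∀ t ∈ Ioo τ T, ∀ x : EuclideanSpace ℝ (Fin N),
      ‖gradient (fun y => u ε y t) x‖^2 ≤ B / ε^2 := by
    intro t htmem x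
    have htIoo : t ∈ Ioo (0:ℝ) T := ⟨lt_trans hτ0 htmem.1, htmem.2⟩
    set h : ℝ := min (τ/2) (ε^2) with hh
    have hh0 : 0 < h := lt_min (by linarith) hε20
    have hhε : h ≤ ε^2 := min_le_right _ _
    have hhτ : h ≤ τ/2 := min_le_left _ _
    have hh1 : h ≤ 1 := le_trans hhε (by nlinarith)
    have hth : h < t := lt_of_le_of_lt hhτ (by linarith [htmem.1])
    have hV : AC.Sm (univ ×ˢ Ioo (0:ℝ) T)
        (fun p : AC.Euc N × ℝ => u ε p.1 p.2) := (hsmooth ε hε).of_le (by simp)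
    have hg : ContDiff ℝ ((⊤ : ℕ∞) : WithTop ℕ∞) (fun r => f r / ε^2) :=
      hfC.div_const _
    have heq : ∀ (x : AC.Euc N), ∀ t ∈ Ioo (0:ℝ) T,
        deriv (fun s => u ε x s) t = lap (fun y => u ε y t) x - f (u ε x t) / ε^2 :=
      fun x' t' ht' => hsol ε hε x' t' ht'
    have hMg : ∀ r : ℝ, |r| ≤ k₀ → |f r / ε^2| ≤ M₀ / ε^2 := by
      intro r hr
      rw [abs_div, abs_of_pos hε20]
      exact div_le_div_of_nonneg_right (hM₀' r hr) hε20.le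
    have hLg : ∀ r : ℝ, |r| ≤ k₀ → |deriv (fun r => f r / ε^2) r| ≤ L₀ / ε^2 := by
      intro r hr
      rw [deriv_div_const, abs_div, abs_of_pos hε20]
      exact div_le_div_of_nonneg_right (hL₀' r hr) hε20.le
    have hber := AC.bernstein hV hg heq (fun x' t' ht' => hbdd ε hε x' t' ht')
      hMg hLg hh0 hh1 htIoo hth x
    -- now bound the right-hand side by B/ε²
    have e1 : h * (L₀ / ε^2) ≤ L₀ := by
      rw [div_eq_mul_inv]
      have h1 : h * (L₀ * (ε^2)⁻¹) = (h / ε^2) * L₀ := by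
        field_simp
      rw [h1]
      have h2 : h / ε^2 ≤ 1 := by
        rw [div_le_one hε20]; exact hhε
      nlinarith
    have e2 : k₀^2 / h ≤ k₀^2 * max (2/τ) 1 / ε^2 := by
      rcases min_choice (τ/2) (ε^2) with hc | hc
      · -- h = τ/2, and τ/2 ≤ ε² is not known; but then ε² might be bigger... use τ/2 ≤ ε² ?
        rw [hh, hc]
        have hτε : k₀^2 / (τ/2) = k₀^2 * (2/τ) := by
          field_simp
        rw [hτε]
        have h1 : k₀^2 * (2/τ) ≤ k₀^2 * max (2/τ) 1 := by
          have := le_max_left (2/τ) 1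
          nlinarith
        have h2 : k₀^2 * max (2/τ) 1 ≤ k₀^2 * max (2/τ) 1 / ε^2 := by
          rw [le_div_iff₀ hε20]
          have hε2le : ε^2 ≤ 1 := by nlinarith
          nlinarith [mul_nonneg (mul_nonneg (sq_nonneg k₀) hmax0)
            (sub_nonneg.mpr hε2le)]
        linarith
      · rw [hh, hc]
        have h1 : k₀^2 ≤ k₀^2 * max (2/τ) 1 := by
          nlinarith [le_max_right (2/τ) 1, sq_nonneg k₀]
        exact (div_le_div_iff_of_pos_right hε20).mpr h1
    have e3 : 2*k₀*(M₀/ε^2) = 2*k₀*M₀/ε^2 := by ring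
    have hf1le : 21 + 2*(N:ℝ) + h*(L₀/ε^2) ≤ D := by rw [hD]; linarith
    have hf2pos : 0 ≤ k₀^2/h + 2*k₀*(M₀/ε^2) := by positivity
    have hf2le : k₀^2/h + 2*k₀*(M₀/ε^2) ≤ (k₀^2 * max (2/τ) 1 + 2*k₀*M₀)/ε^2 := by
      rw [e3, add_div] at *
      linarith
    have hprod : (21 + 2*(N:ℝ) + h*(L₀/ε^2)) * (k₀^2/h + 2*k₀*(M₀/ε^2))
        ≤ D * ((k₀^2 * max (2/τ) 1 + 2*k₀*M₀)/ε^2) :=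
      mul_le_mul hf1le hf2le hf2pos hD0
    have hBe : D * ((k₀^2 * max (2/τ) 1 + 2*k₀*M₀)/ε^2) = (B-1)/ε^2 := by
      rw [hB]
      ring
    have hfin : (B-1)/ε^2 ≤ B/ε^2 := (div_le_div_iff_of_pos_right hε20).mpr (by linarith)
    calc ‖gradient (fun y => u ε y t) x‖^2
        ≤ (21 + 2*(N:ℝ) + h*(L₀/ε^2)) * (k₀^2/h + 2*k₀*(M₀/ε^2)) := hber
      _ ≤ D * ((k₀^2 * max (2/τ) 1 + 2*k₀*M₀)/ε^2) := hprod
      _ = (B-1)/ε^2 := hBe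
      _ ≤ B/ε^2 := hfin
  -- nonnegativity of F
  have hFnonneg : ∀ r : ℝ, 0 ≤ F r := by
    intro r
    rcases eq_or_ne r (-1) with h | h
    · rw [h, hFm1]
    rcases eq_or_ne r 1 with h' | h'
    · rw [h', hF1]
    exact (hFpos r h h').le
  constructor
  · -- gradient bound
    intro t htm x hx
    have h1 := hgradsq t htm x
    have h2 : ‖gradient (fun y => u ε y t) x‖^2 ≤ (k₁/ε)^2 := by
      rw [div_pow, hk₁sq]
      exact h1
    have h3 : ‖gradient (fun y => u ε y t) x‖ ≤ k₁/ε :=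
      AC.le_of_sq_le_sq' h2 (by positivity)
    have h4 : k₁/ε ≤ max k₁ (B/2) / ε :=
      (div_le_div_iff_of_pos_right hε0).mpr (le_max_left _ _)
    linarith
  · -- discrepancy bound
    intro x hx t htm
    have h1 := hgradsq t htm x
    have hFu : 0 ≤ F (u ε x t) := hFnonneg _
    have hstep : ε * (ε/2 * ‖gradient (fun y => u ε y t) x‖^2 - F (u ε x t)/ε)
        = ε^2/2 * ‖gradient (fun y => u ε y t) x‖^2 - F (u ε x t) := by
      field_simp
    have h2 : ε^2/2 * ‖gradient (fun y => u ε y t) x‖^2 ≤ ε^2/2 * (B/ε^2) :=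
      mul_le_mul_of_nonneg_left h1 (by positivity)
    have h3 : ε^2/2 * (B/ε^2) = B/2 := by
      field_simp
    have h4 : B/2 ≤ max k₁ (B/2) := le_max_right _ _
    linarith [hstep.le, hstep.ge]
end

section
/- Let U ⊂ ℝᴺ be open, I ⊂ ℝ an open interval, ε > 0, and let u be a smooth solution of ∂ₜu = Δu − ε^{-2} f(u) on U × I. Fix σ > 0 and H₀ > 0, set G(s) := ε^σ(2H₀ − s²) (so G'' ≡ −2ε^σ), and define ϕ_G(x,t) := (ε²/2)‖∇u(x,t)‖² − F(u(x,t)) − G(u(x,t)). Then at every point (x,t) ∈ U × I with ∇u(x,t) ≠ 0 the following differential inequality holds: Δϕ_G − ∂ₜϕ_G + (2G''(u)/ε²) ϕ_G − (2/ε²)(F'(u) + G'(u)) ⟨∇u, ∇ϕ_G⟩ / ‖∇u‖² ≥ −(2G''(u)/ε²)(F(u) + G(u)) + ε^{-2}(G'(u))² + ε^{-2} F'(u) G'(u). -/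
open scoped RealInnerProductSpace

theorem hasFDerivAt_eval' {X Y Z : Type*} [NormedAddCommGroup X] [NormedSpace ℝ X]
    [NormedAddCommGroup Y] [NormedSpace ℝ Y] [NormedAddCommGroup Z] [NormedSpace ℝ Z]
    {Φ : X → Y →L[ℝ] Z} {Φ' : X →L[ℝ] Y →L[ℝ] Z} {x : X}
    (h : HasFDerivAt Φ Φ' x) (w : Y) :
    HasFDerivAt (fun x' => Φ x' w) (Φ'.flip w) x := by
  simpa using h.clm_apply (hasFDerivAt_const w x)

theorem hasFDerivAt_slice_fst' {E F : Type*} [NormedAddCommGroup E] [NormedSpace ℝ E]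
    [NormedAddCommGroup F] [NormedSpace ℝ F] {v : E × ℝ → F} {y : E} {s : ℝ}
    (h : DifferentiableAt ℝ v (y, s)) :
    HasFDerivAt (fun y' => v (y', s)) ((fderiv ℝ v (y, s)).comp (ContinuousLinearMap.inl ℝ E ℝ)) y :=
  h.hasFDerivAt.comp y (hasFDerivAt_prodMk_left y s)

theorem hasDerivAt_slice_snd' {E F : Type*} [NormedAddCommGroup E] [NormedSpace ℝ E]
    [NormedAddCommGroup F] [NormedSpace ℝ F] {v : E × ℝ → F} {y : E} {s : ℝ}
    (h : DifferentiableAt ℝ v (y, s)) :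
    HasDerivAt (fun s' => v (y, s')) (fderiv ℝ v (y, s) (0, 1)) s := by
  simpa [Function.comp_def] using (h.hasFDerivAt.comp s (hasFDerivAt_prodMk_right y s)).hasDerivAt

theorem norm_sq_eq_sum' {N : ℕ} (z : EuclideanSpace ℝ (Fin N)) : ‖z‖^2 = ∑ i, (z i)^2 := by
  rw [EuclideanSpace.norm_eq, Real.sq_sqrt (by positivity)]
  simp [sq_abs]

theorem inner_eq_sum' {N : ℕ} (z w : EuclideanSpace ℝ (Fin N)) : ⟪z, w⟫ = ∑ i, z i * w i := by
  simp [PiLp.inner_apply, RCLike.inner_apply, mul_comm]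

theorem gradient_coord' {N : ℕ} (g : EuclideanSpace ℝ (Fin N) → ℝ)
    (x : EuclideanSpace ℝ (Fin N)) (i : Fin N) :
    gradient g x i = fderiv ℝ g x (EuclideanSpace.single i 1) := by
  have h1 : ⟪gradient g x, EuclideanSpace.single i 1⟫ = gradient g x i := by
    rw [EuclideanSpace.inner_single_right]; simp
  rw [← h1, gradient, InnerProductSpace.toDual_symm_apply]

/-- The key algebraic inequality. -/
theorem key_alg' (B W G2 p ε : ℝ) (hε : 0 < ε) (hG : 0 < G2) (hCS : W^2 ≤ B * G2^2) :
    2 * p * W / G2 ≤ ε^2 * B + p^2 / ε^2 := by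
  have hq : p^2/ε^2 = (p/ε)^2 := (div_pow p ε 2).symm
  rw [div_le_iff₀ hG, hq]
  set q := p/ε with hqdef
  have hpq : p = q * ε := by rw [hqdef]; field_simp
  rw [hpq]
  nlinarith [sq_nonneg (ε*W - q*G2), mul_le_mul_of_nonneg_left hCS (sq_nonneg ε), hG,
    sq_nonneg q, mul_pos hε hε]

theorem final_alg' (ε σ H₀ uu ff df Fu SgK B G2 T W : ℝ) (hε : 0 < ε) (hG2 : 0 < G2)
    (hCS : W^2 ≤ B * G2^2) :
    (ε^2*SgK + ε^2*B - (df + -2*ε^σ)*G2 - (ff + -2*ε^σ*uu)*T)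
      - (ε^2*SgK - df*G2 - (ff + -2*ε^σ*uu)*T + (ff + -2*ε^σ*uu)*ff/ε^2)
      + 2 * (-2 * ε ^ σ) / ε ^ 2 * (ε^2/2*G2 - Fu - ε^σ*(2*H₀ - uu^2))
      - 2 / ε ^ 2 * (ff + -2 * ε ^ σ * uu) * (ε^2*W - (ff + -2*ε^σ*uu)*G2) / G2
    ≥ -(2 * (-2 * ε ^ σ) / ε ^ 2) * (Fu + ε ^ σ * (2 * H₀ - uu ^ 2))
      + (-2 * ε ^ σ * uu) ^ 2 / ε ^ 2 + ff * (-2 * ε ^ σ * uu) / ε ^ 2 := by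
  have hkey := key_alg' B W G2 (ff + -2*ε^σ*uu) ε hε hG2 hCS
  rw [ge_iff_le, ← sub_nonneg]
  have hG2' : G2 ≠ 0 := ne_of_gt hG2
  have hε' : ε ≠ 0 := ne_of_gt hε
  have heq : (ε^2*SgK + ε^2*B - (df + -2*ε^σ)*G2 - (ff + -2*ε^σ*uu)*T)
      - (ε^2*SgK - df*G2 - (ff + -2*ε^σ*uu)*T + (ff + -2*ε^σ*uu)*ff/ε^2)
      + 2 * (-2 * ε ^ σ) / ε ^ 2 * (ε^2/2*G2 - Fu - ε^σ*(2*H₀ - uu^2))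
      - 2 / ε ^ 2 * (ff + -2 * ε ^ σ * uu) * (ε^2*W - (ff + -2*ε^σ*uu)*G2) / G2
      - (-(2 * (-2 * ε ^ σ) / ε ^ 2) * (Fu + ε ^ σ * (2 * H₀ - uu ^ 2))
        + (-2 * ε ^ σ * uu) ^ 2 / ε ^ 2 + ff * (-2 * ε ^ σ * uu) / ε ^ 2)
      = ε^2*B + (ff + -2*ε^σ*uu)^2/ε^2 - 2*(ff + -2*ε^σ*uu)*W/G2 := by
    field_simp
    ring
  rw [heq]
  linarith

set_option maxHeartbeats 2000000 in
/-- the differential inequality of the paper's Lemma 3.6 (Euclidean case) for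
`ϕ_G = (ε²/2)‖∇u‖² − F(u) − G(u)`, `G(s) = ε^σ(2H₀ − s²)`, at points where `∇u ≠ 0`. -/
theorem phiG_differential_inequality
    (N : ℕ) (hN : 1 ≤ N)
    (F f : ℝ → ℝ)
    -- hypotheses (H₀) on the nonlinearity
    (hF : ContDiff ℝ (⊤ : ℕ∞) F)
    (hFeven : ∀ x : ℝ, F (-x) = F x)
    (hFpos : ∀ x : ℝ, x ≠ -1 → x ≠ 1 → 0 < F x)
    (hF1 : F 1 = 0) (hFm1 : F (-1) = 0)
    (hfF : f = deriv F)
    (hf0 : f 0 = 0) (hf1 : f 1 = 0) (hfm1 : f (-1) = 0)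
    (hfneg : ∀ x ∈ Set.Ioo (0 : ℝ) 1, f x < 0)
    (hfpos : ∀ x : ℝ, 1 < x → 0 < f x)
    (hdf0 : deriv f 0 < 0) (hdf1 : 0 < deriv f 1) (hdfm1 : 0 < deriv f (-1))
    (hFconv : ∃ α ∈ Set.Ioo (0 : ℝ) 1, ∃ c > 0, ∀ x : ℝ, α ≤ x → c ≤ deriv (deriv F) x)
    (U : Set (EuclideanSpace ℝ (Fin N))) (hU : IsOpen U)
    (a b : ℝ) (hab : a < b)
    (ε : ℝ) (hε : 0 < ε) (σ H₀ : ℝ) (hσ : 0 < σ) (hH₀ : 0 < H₀)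
    (u : EuclideanSpace ℝ (Fin N) → ℝ → ℝ)
    -- `u` is a smooth solution of the Allen–Cahn equation on `U × (a,b)`
    (husmooth : ContDiffOn ℝ (⊤ : ℕ∞) (fun p : EuclideanSpace ℝ (Fin N) × ℝ => u p.1 p.2)
      (U ×ˢ Set.Ioo a b))
    (hsol : ∀ x ∈ U, ∀ t ∈ Set.Ioo a b,
      deriv (fun s => u x s) t = lap (fun y => u y t) x - f (u x t) / ε ^ 2)
    (φG : EuclideanSpace ℝ (Fin N) → ℝ → ℝ)
    (hφG : ∀ x t, φG x t
      = ε ^ 2 / 2 * ‖gradient (fun y => u y t) x‖ ^ 2 - F (u x t)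
        - ε ^ σ * (2 * H₀ - (u x t) ^ 2)) :
    ∀ x ∈ U, ∀ t ∈ Set.Ioo a b, gradient (fun y => u y t) x ≠ 0 →
      lap (fun y => φG y t) x - deriv (fun s => φG x s) t
        + 2 * (-2 * ε ^ σ) / ε ^ 2 * φG x t
        - 2 / ε ^ 2 * (f (u x t) + -2 * ε ^ σ * u x t)
            * ⟪gradient (fun y => u y t) x, gradient (fun y => φG y t) x⟫
            / ‖gradient (fun y => u y t) x‖ ^ 2
      ≥ -(2 * (-2 * ε ^ σ) / ε ^ 2) * (F (u x t) + ε ^ σ * (2 * H₀ - (u x t) ^ 2))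
        + (-2 * ε ^ σ * u x t) ^ 2 / ε ^ 2
        + f (u x t) * (-2 * ε ^ σ * u x t) / ε ^ 2 := by
  intro x hx t ht hgrad
  classical
  set Ω : Set (EuclideanSpace ℝ (Fin N) × ℝ) := U ×ˢ Set.Ioo a b with hΩdef
  have hΩ : IsOpen Ω := hU.prod isOpen_Ioo
  set v : EuclideanSpace ℝ (Fin N) × ℝ → ℝ := fun p => u p.1 p.2 with hvdef
  have hp0 : ((x, t) : EuclideanSpace ℝ (Fin N) × ℝ) ∈ Ω := ⟨hx, ht⟩
  have hvs : ContDiffOn ℝ (⊤:ℕ∞) v Ω := husmooth.of_le (by simp)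
  have hv1 : ∀ q ∈ Ω, DifferentiableAt ℝ v q := fun q hq =>
    (hvs.contDiffAt (hΩ.mem_nhds hq)).differentiableAt (by simp)
  set D1 := fderiv ℝ v with hD1def
  set D2 := fderiv ℝ D1 with hD2def
  set D3 := fderiv ℝ D2 with hD3def
  have hD1s : ContDiffOn ℝ (⊤:ℕ∞) D1 Ω := hvs.fderiv_of_isOpen hΩ le_rfl
  have hD1diff : ∀ q ∈ Ω, DifferentiableAt ℝ D1 q := fun q hq =>
    (hD1s.contDiffAt (hΩ.mem_nhds hq)).differentiableAt (by simp)
  have hD2s : ContDiffOn ℝ (⊤:ℕ∞) D2 Ω := hD1s.fderiv_of_isOpen hΩ le_rfl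
  have hD2diff : ∀ q ∈ Ω, DifferentiableAt ℝ D2 q := fun q hq =>
    (hD2s.contDiffAt (hΩ.mem_nhds hq)).differentiableAt (by simp)
  -- basis directions
  set Ej : Fin N → EuclideanSpace ℝ (Fin N) × ℝ := fun i => (EuclideanSpace.single i 1, 0) with hEjdef
  set τ : EuclideanSpace ℝ (Fin N) × ℝ := (0, 1) with hτdef
  -- directional derivative facts
  have hB : ∀ q ∈ Ω, ∀ w, HasFDerivAt (fun q' => D1 q' w) ((D2 q).flip w) q := fun q hq w =>
    hasFDerivAt_eval' (hD1diff q hq).hasFDerivAt w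
  have hC : ∀ q ∈ Ω, ∀ w2 w1, HasFDerivAt (fun q' => D2 q' w2 w1) (((D3 q).flip w2).flip w1) q :=
    fun q hq w2 w1 => hasFDerivAt_eval' (hasFDerivAt_eval' (hD2diff q hq).hasFDerivAt w2) w1
  -- symmetry of second derivatives
  have hsym2 : ∀ q ∈ Ω, ∀ w1 w2, D2 q w1 w2 = D2 q w2 w1 := by
    intro q hq w1 w2
    exact second_derivative_symmetric_of_eventually
      (by filter_upwards [hΩ.mem_nhds hq] with y hy using (hv1 y hy).hasFDerivAt)
      (hD1diff q hq).hasFDerivAt w1 w2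
  have hsym3a : ∀ w1 w2 w3, D3 (x,t) w1 w2 w3 = D3 (x,t) w2 w1 w3 := by
    intro w1 w2 w3
    have h := second_derivative_symmetric_of_eventually (f := D1) (f' := D2)
      (by filter_upwards [hΩ.mem_nhds hp0] with y hy using (hD1diff y hy).hasFDerivAt)
      (hD2diff _ hp0).hasFDerivAt w1 w2
    rw [h]
  have hsym3b : ∀ w3 w1 w2, D3 (x,t) w3 w1 w2 = D3 (x,t) w3 w2 w1 := by
    intro w3 w1 w2
    have e1 : (fun q => D2 q w1 w2) =ᶠ[nhds ((x,t) : EuclideanSpace ℝ (Fin N) × ℝ)] (fun q => D2 q w2 w1) := by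
      filter_upwards [hΩ.mem_nhds hp0] with q hq using hsym2 q hq w1 w2
    have h1 := (hC _ hp0 w1 w2).fderiv
    have h2 := (hC _ hp0 w2 w1).fderiv
    have h3 := e1.fderiv_eq (𝕜 := ℝ)
    have h4 : (((D3 (x,t)).flip w1).flip w2) = (((D3 (x,t)).flip w2).flip w1) := by
      rw [← h1, ← h2, h3]
    have h5 := congrArg (fun (L : (EuclideanSpace ℝ (Fin N) × ℝ) →L[ℝ] ℝ) => L w3) h4
    simpa using h5
  -- smoothness of f
  have hfC : ContDiff ℝ (⊤:ℕ∞) f := by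
    rw [hfF]
    exact (contDiff_infty_iff_deriv.mp (hF.of_le (by simp))).2
  have hFd : ∀ r : ℝ, HasDerivAt F (f r) r := by
    intro r
    rw [hfF]
    exact (hF.differentiable (by simp) r).hasDerivAt
  have hfd : ∀ r : ℝ, HasDerivAt f (deriv f r) r := fun r =>
    (hfC.differentiable (by simp) r).hasDerivAt
  -- slices of u
  have huslice : ∀ y ∈ U, ∀ s ∈ Set.Ioo a b,
      HasFDerivAt (fun y' => u y' s)
        ((D1 (y,s)).comp (ContinuousLinearMap.inl ℝ (EuclideanSpace ℝ (Fin N)) ℝ)) y :=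
    fun y hy s hs => hasFDerivAt_slice_fst' (v := v) (hv1 (y,s) ⟨hy,hs⟩)
  have hgradu : ∀ y ∈ U, ∀ s ∈ Set.Ioo a b, ∀ i,
      gradient (fun y' => u y' s) y i = D1 (y,s) (Ej i) := by
    intro y hy s hs i
    rw [gradient_coord', (huslice y hy s hs).fderiv]
    simp [hEjdef]
  have hnormgrad : ∀ y ∈ U, ∀ s ∈ Set.Ioo a b,
      ‖gradient (fun y' => u y' s) y‖^2 = ∑ i, (D1 (y,s) (Ej i))^2 := by
    intro y hy s hs
    rw [norm_sq_eq_sum']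
    exact Finset.sum_congr rfl fun i _ => by rw [hgradu y hy s hs i]
  have hut : ∀ y ∈ U, ∀ s ∈ Set.Ioo a b,
      deriv (fun s' => u y s') s = D1 (y,s) τ := by
    intro y hy s hs
    have h := (hasDerivAt_slice_snd' (v := v) (hv1 (y,s) ⟨hy,hs⟩)).deriv
    simpa [hτdef] using h
  have hlapu : ∀ y ∈ U, ∀ s ∈ Set.Ioo a b,
      lap (fun y' => u y' s) y = ∑ j, D2 (y,s) (Ej j) (Ej j) := by
    intro y hy s hs
    unfold lap
    refine Finset.sum_congr rfl fun j _ => ?_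
    have heq : (fun y' => fderiv ℝ (fun y'' => u y'' s) y' (EuclideanSpace.single j 1))
        =ᶠ[nhds y] (fun y' => D1 (y', s) (Ej j)) := by
      filter_upwards [hU.mem_nhds hy] with y' hy'
      rw [(huslice y' hy' s hs).fderiv]
      simp [hEjdef]
    rw [heq.fderiv_eq]
    have h2 : HasFDerivAt (fun y' => D1 (y', s) (Ej j))
        (((D2 (y,s)).flip (Ej j)).comp (ContinuousLinearMap.inl ℝ _ ℝ)) y :=
      (hB (y,s) ⟨hy,hs⟩ (Ej j)).comp (f := fun y : EuclideanSpace ℝ (Fin N) => (y, s)) y (hasFDerivAt_prodMk_left y s)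
    rw [h2.fderiv]
    simp [hEjdef]
  have hpde : ∀ q ∈ Ω, D1 q τ = (∑ j, D2 q (Ej j) (Ej j)) - f (v q) / ε^2 := by
    rintro ⟨y, s⟩ ⟨hy, hs⟩
    rw [← hut y hy s hs, ← hlapu y hy s hs]
    exact hsol y hy s hs
  -- differentiate the PDE in spatial directions at (x,t)
  have hpde' : ∀ i, D2 (x,t) (Ej i) τ
      = (∑ j, D3 (x,t) (Ej i) (Ej j) (Ej j)) - deriv f (u x t) * D1 (x,t) (Ej i) / ε^2 := by
    intro i
    have e1 : (fun q => D1 q τ) =ᶠ[nhds ((x,t) : EuclideanSpace ℝ (Fin N) × ℝ)]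
        (fun q => (∑ j, D2 q (Ej j) (Ej j)) - (ε^2)⁻¹ * f (v q)) := by
      filter_upwards [hΩ.mem_nhds hp0] with q hq
      rw [hpde q hq]; ring
    have hL : HasFDerivAt (fun q => D1 q τ) ((D2 (x,t)).flip τ) (x,t) := hB _ hp0 τ
    have hsum : HasFDerivAt (fun q : EuclideanSpace ℝ (Fin N) × ℝ => ∑ j, D2 q (Ej j) (Ej j))
        (∑ j, ((D3 (x,t)).flip (Ej j)).flip (Ej j)) (x,t) :=
      HasFDerivAt.fun_sum fun j _ => hC _ hp0 (Ej j) (Ej j)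
    have hfv : HasFDerivAt (fun q => f (v q)) (deriv f (v (x,t)) • D1 (x,t)) (x,t) := by
      have h := (hfd (v (x,t))).comp_hasFDerivAt _ (hv1 _ hp0).hasFDerivAt
      exact h
    have hR : HasFDerivAt (fun q => (∑ j, D2 q (Ej j) (Ej j)) - (ε^2)⁻¹ * f (v q))
        ((∑ j, ((D3 (x,t)).flip (Ej j)).flip (Ej j))
          - (ε^2)⁻¹ • (deriv f (v (x,t)) • D1 (x,t))) (x,t) := by
      exact hsum.sub (hfv.const_mul _)
    have h3 := e1.fderiv_eq (𝕜 := ℝ)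
    have h4 : ((D2 (x,t)).flip τ) (Ej i)
        = ((∑ j, ((D3 (x,t)).flip (Ej j)).flip (Ej j))
          - (ε^2)⁻¹ • (deriv f (v (x,t)) • D1 (x,t))) (Ej i) := by
      rw [← hL.fderiv, ← hR.fderiv, h3]
    simp only [ContinuousLinearMap.flip_apply, ContinuousLinearMap.sub_apply,
      ContinuousLinearMap.sum_apply, ContinuousLinearMap.smul_apply, smul_eq_mul] at h4
    rw [h4, hvdef]
    ring
  -- the auxiliary function Φ and its derivative
  set Φ : EuclideanSpace ℝ (Fin N) × ℝ → ℝ := fun q =>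
    ε^2/2 * (∑ i, D1 q (Ej i) * D1 q (Ej i)) - F (v q) - ε^σ * (2*H₀ - v q * v q) with hΦdef
  set LL : (EuclideanSpace ℝ (Fin N) × ℝ) → ((EuclideanSpace ℝ (Fin N) × ℝ) →L[ℝ] ℝ) := fun q =>
    (ε^2/2) • (∑ i, (D1 q (Ej i) • ((D2 q).flip (Ej i)) + D1 q (Ej i) • ((D2 q).flip (Ej i))))
      - f (v q) • D1 q
      - ε^σ • ((0 : (EuclideanSpace ℝ (Fin N) × ℝ) →L[ℝ] ℝ) - (v q • D1 q + v q • D1 q))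
    with hLLdef
  have hφΩ : ∀ q ∈ Ω, φG q.1 q.2 = Φ q := by
    rintro ⟨y, s⟩ ⟨hy, hs⟩
    have h1 := hnormgrad y hy s hs
    simp only [hΦdef]
    rw [hφG y s, h1]
    have h2 : ∑ i, (D1 (y,s) (Ej i))^2 = ∑ i, D1 (y,s) (Ej i) * D1 (y,s) (Ej i) :=
      Finset.sum_congr rfl fun i _ => by ring
    rw [h2, hvdef]
    ring
  have hΦhas : ∀ q ∈ Ω, HasFDerivAt Φ (LL q) q := by
    intro q hq
    have hsq : ∀ i : Fin N, HasFDerivAt (fun q' => D1 q' (Ej i) * D1 q' (Ej i))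
        (D1 q (Ej i) • ((D2 q).flip (Ej i)) + D1 q (Ej i) • ((D2 q).flip (Ej i))) q :=
      fun i => (hB q hq (Ej i)).mul (hB q hq (Ej i))
    have hsum := HasFDerivAt.fun_sum (u := Finset.univ) fun i _ => hsq i
    have hFv : HasFDerivAt (fun q' => F (v q')) (f (v q) • D1 q) q := by
      have h := (hFd (v q)).comp_hasFDerivAt _ (hv1 q hq).hasFDerivAt
      exact h
    have hvv : HasFDerivAt (fun q' => v q' * v q') (v q • D1 q + v q • D1 q) q :=
      (hv1 q hq).hasFDerivAt.mul (hv1 q hq).hasFDerivAt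
    have hgg : HasFDerivAt (fun q' => 2*H₀ - v q' * v q') (0 - (v q • D1 q + v q • D1 q)) q :=
      (hasFDerivAt_const _ _).sub hvv
    exact ((hsum.const_mul (ε^2/2)).sub hFv).sub (hgg.const_mul (ε^σ))
  have hLLeval : ∀ q w, LL q w
      = ε^2 * (∑ i, D1 q (Ej i) * D2 q w (Ej i)) - (f (v q) + (-2*ε^σ* v q)) * D1 q w := by
    intro q w
    simp only [hLLdef, ContinuousLinearMap.sub_apply, ContinuousLinearMap.smul_apply,
      ContinuousLinearMap.sum_apply, ContinuousLinearMap.add_apply,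
      ContinuousLinearMap.flip_apply, ContinuousLinearMap.zero_apply, smul_eq_mul]
    rw [Finset.mul_sum, Finset.mul_sum]
    have h1 : ∑ i : Fin N, ε ^ 2 / 2 * (D1 q (Ej i) * D2 q w (Ej i) + D1 q (Ej i) * D2 q w (Ej i))
        = ∑ i : Fin N, ε ^ 2 * (D1 q (Ej i) * D2 q w (Ej i)) :=
      Finset.sum_congr rfl fun i _ => by ring
    rw [h1]; ring
  -- time derivative of φG
  have htime : deriv (fun s => φG x s) t = LL (x,t) τ := by
    have e1 : (fun s => φG x s) =ᶠ[nhds t] (fun s => Φ (x, s)) := by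
      filter_upwards [isOpen_Ioo.mem_nhds ht] with s hs
      exact hφΩ (x,s) ⟨hx, hs⟩
    rw [e1.deriv_eq]
    have h2 : HasDerivAt (fun s => Φ (x, s)) (LL (x,t) τ) t := by
      have h := ((hΦhas _ hp0).comp t (hasFDerivAt_prodMk_right x t)).hasDerivAt
      simpa [hτdef, Function.comp_def] using h
    exact h2.deriv
  -- spatial derivative of the φG slice
  have hψ : ∀ y ∈ U, fderiv ℝ (fun y' => φG y' t) y
      = (LL (y,t)).comp (ContinuousLinearMap.inl ℝ (EuclideanSpace ℝ (Fin N)) ℝ) := by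
    intro y hy
    have e1 : (fun y' => φG y' t) =ᶠ[nhds y] (fun y' => Φ (y', t)) := by
      filter_upwards [hU.mem_nhds hy] with y' hy'
      exact hφΩ (y',t) ⟨hy', ht⟩
    rw [e1.fderiv_eq]
    exact ((hΦhas _ ⟨hy, ht⟩).comp y (hasFDerivAt_prodMk_left y t)).fderiv
  have hgradφ : ∀ i, gradient (fun y' => φG y' t) x i = LL (x,t) (Ej i) := by
    intro i
    rw [gradient_coord', hψ x hx]
    simp [hEjdef]
  have hinner : ⟪gradient (fun y' => u y' t) x, gradient (fun y' => φG y' t) x⟫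
      = ∑ i, D1 (x,t) (Ej i) * LL (x,t) (Ej i) := by
    rw [inner_eq_sum']
    exact Finset.sum_congr rfl fun i _ => by rw [hgradu x hx t ht i, hgradφ i]
  -- the Laplacian of the φG slice
  have hlapφ : lap (fun y' => φG y' t) x
      = ∑ j, (ε^2 * (∑ i, (D1 (x,t) (Ej i) * D3 (x,t) (Ej j) (Ej j) (Ej i)
              + D2 (x,t) (Ej j) (Ej i) * D2 (x,t) (Ej j) (Ej i)))
          - ((f (u x t) + (-2*ε^σ*(u x t))) * D2 (x,t) (Ej j) (Ej j)
             + D1 (x,t) (Ej j) * (deriv f (u x t) * D1 (x,t) (Ej j)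
                 + (-2*ε^σ) * D1 (x,t) (Ej j)))) := by
    unfold lap
    refine Finset.sum_congr rfl fun j _ => ?_
    have heq : (fun y' => fderiv ℝ (fun y'' => φG y'' t) y' (EuclideanSpace.single j 1))
        =ᶠ[nhds x] (fun y' => ε^2 * (∑ i, D1 (y',t) (Ej i) * D2 (y',t) (Ej j) (Ej i))
            - (f (v (y',t)) + (-2*ε^σ* v (y',t))) * D1 (y',t) (Ej j)) := by
      filter_upwards [hU.mem_nhds hx] with y' hy'
      rw [hψ y' hy']
      have h := hLLeval (y',t) (Ej j)
      simpa [hEjdef] using h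
    rw [heq.fderiv_eq]
    have hA : ∀ w : EuclideanSpace ℝ (Fin N) × ℝ, HasFDerivAt (fun y => D1 (y,t) w)
        (((D2 (x,t)).flip w).comp (ContinuousLinearMap.inl ℝ (EuclideanSpace ℝ (Fin N)) ℝ)) x :=
      fun w => (hB _ hp0 w).comp (f := fun y : EuclideanSpace ℝ (Fin N) => (y, t)) x (hasFDerivAt_prodMk_left x t)
    have hD : ∀ w2 w1, HasFDerivAt (fun y => D2 (y,t) w2 w1)
        ((((D3 (x,t)).flip w2).flip w1).comp (ContinuousLinearMap.inl ℝ (EuclideanSpace ℝ (Fin N)) ℝ)) x :=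
      fun w2 w1 => (hC _ hp0 w2 w1).comp (f := fun y'' : EuclideanSpace ℝ (Fin N) => (y'', t)) x (hasFDerivAt_prodMk_left x t)
    have hv' : HasFDerivAt (fun y => v (y,t))
        ((D1 (x,t)).comp (ContinuousLinearMap.inl ℝ (EuclideanSpace ℝ (Fin N)) ℝ)) x :=
      hasFDerivAt_slice_fst' (hv1 _ hp0)
    have hfv' : HasFDerivAt (fun y => f (v (y,t)))
        (deriv f (v (x,t)) • ((D1 (x,t)).comp (ContinuousLinearMap.inl ℝ (EuclideanSpace ℝ (Fin N)) ℝ))) x := by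
      have h := (hfd (v (x,t))).comp_hasFDerivAt x hv'
      exact h
    have hP : HasFDerivAt (fun y => f (v (y,t)) + (-2*ε^σ* v (y,t)))
        (deriv f (v (x,t)) • ((D1 (x,t)).comp (ContinuousLinearMap.inl ℝ (EuclideanSpace ℝ (Fin N)) ℝ))
          + (-2*ε^σ) • ((D1 (x,t)).comp (ContinuousLinearMap.inl ℝ (EuclideanSpace ℝ (Fin N)) ℝ))) x :=
      hfv'.add (hv'.const_mul _)
    have hSi : ∀ i, HasFDerivAt (fun y => D1 (y,t) (Ej i) * D2 (y,t) (Ej j) (Ej i))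
        (D1 (x,t) (Ej i) • ((((D3 (x,t)).flip (Ej j)).flip (Ej i)).comp (ContinuousLinearMap.inl ℝ (EuclideanSpace ℝ (Fin N)) ℝ))
          + D2 (x,t) (Ej j) (Ej i) • (((D2 (x,t)).flip (Ej i)).comp (ContinuousLinearMap.inl ℝ (EuclideanSpace ℝ (Fin N)) ℝ))) x :=
      fun i => (hA (Ej i)).mul (hD (Ej j) (Ej i))
    have hS := HasFDerivAt.fun_sum (u := Finset.univ) fun i _ => hSi i
    have hPT := hP.mul (hA (Ej j))
    have htotal := (hS.const_mul (ε^2)).sub hPT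
    have htotal' : HasFDerivAt (fun y' => ε ^ 2 * (∑ i, D1 (y',t) (Ej i) * D2 (y',t) (Ej j) (Ej i))
      - (f (v (y',t)) + (-2*ε^σ* v (y',t))) * D1 (y',t) (Ej j)) _ x := htotal
    rw [htotal'.fderiv]
    have hv0 : v (x,t) = u x t := by rw [hvdef]
    simp only [ContinuousLinearMap.sub_apply, ContinuousLinearMap.add_apply,
      ContinuousLinearMap.smul_apply, ContinuousLinearMap.sum_apply,
      ContinuousLinearMap.comp_apply, ContinuousLinearMap.flip_apply,
      ContinuousLinearMap.inl_apply, smul_eq_mul, hv0, hEjdef]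
  -- scalar abbreviations
  set G2 : ℝ := ∑ i, D1 (x,t) (Ej i) * D1 (x,t) (Ej i) with hG2def
  set B : ℝ := ∑ j, ∑ i, D2 (x,t) (Ej j) (Ej i) * D2 (x,t) (Ej j) (Ej i) with hBdef
  set T : ℝ := ∑ j, D2 (x,t) (Ej j) (Ej j) with hTdef
  set SgK : ℝ := ∑ i, D1 (x,t) (Ej i) * (∑ j, D3 (x,t) (Ej i) (Ej j) (Ej j)) with hSgKdef
  set W : ℝ := ∑ i, ∑ k, (D1 (x,t) (Ej i) * D1 (x,t) (Ej k)) * D2 (x,t) (Ej i) (Ej k) with hWdef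
  have hv0 : v (x,t) = u x t := by rw [hvdef]
  -- symmetry of the third derivative in the needed form
  have hthird : ∀ j i, D3 (x,t) (Ej j) (Ej j) (Ej i) = D3 (x,t) (Ej i) (Ej j) (Ej j) := by
    intro j i
    rw [hsym3b (Ej j) (Ej j) (Ej i), hsym3a (Ej j) (Ej i) (Ej j)]
  -- positivity of G2
  have hnorm2 : ‖gradient (fun y => u y t) x‖^2 = G2 := by
    rw [hnormgrad x hx t ht, hG2def]
    exact Finset.sum_congr rfl fun i _ => by ring
  have hG2pos : 0 < G2 := by
    rw [← hnorm2]
    have h1 : 0 < ‖gradient (fun y => u y t) x‖ := norm_pos_iff.mpr hgrad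
    positivity
  -- Cauchy-Schwarz
  have hCS : W^2 ≤ B * G2^2 := by
    have h1 := Finset.sum_mul_sq_le_sq_mul_sq Finset.univ
      (fun q : Fin N × Fin N => D1 (x,t) (Ej q.1) * D1 (x,t) (Ej q.2))
      (fun q : Fin N × Fin N => D2 (x,t) (Ej q.1) (Ej q.2))
    have hW' : W = ∑ q : Fin N × Fin N,
        (D1 (x,t) (Ej q.1) * D1 (x,t) (Ej q.2)) * D2 (x,t) (Ej q.1) (Ej q.2) := by
      rw [hWdef, Fintype.sum_prod_type]
    have hB' : (∑ q : Fin N × Fin N, (D2 (x,t) (Ej q.1) (Ej q.2))^2) = B := by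
      rw [hBdef, Fintype.sum_prod_type]
      exact Finset.sum_congr rfl fun i _ => Finset.sum_congr rfl fun k _ => by ring
    have hGG : (∑ q : Fin N × Fin N, (D1 (x,t) (Ej q.1) * D1 (x,t) (Ej q.2))^2) = G2^2 := by
      rw [hG2def, Fintype.sum_prod_type]
      rw [pow_two, Finset.sum_mul_sum]
      exact Finset.sum_congr rfl fun i _ => Finset.sum_congr rfl fun k _ => by ring
    rw [hW']
    calc (∑ q : Fin N × Fin N, (D1 (x,t) (Ej q.1) * D1 (x,t) (Ej q.2)) * D2 (x,t) (Ej q.1) (Ej q.2))^2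
        ≤ (∑ q : Fin N × Fin N, (D1 (x,t) (Ej q.1) * D1 (x,t) (Ej q.2))^2)
          * (∑ q : Fin N × Fin N, (D2 (x,t) (Ej q.1) (Ej q.2))^2) := h1
      _ = B * G2^2 := by rw [hB', hGG]; ring
  -- Laplacian in final form
  have hlap2 : lap (fun y => φG y t) x
      = ε^2*SgK + ε^2*B - (deriv f (u x t) + -2*ε^σ)*G2 - (f (u x t) + -2*ε^σ*u x t)*T := by
    rw [hlapφ]
    have h1 : ∀ j : Fin N, (ε^2 * (∑ i, (D1 (x,t) (Ej i) * D3 (x,t) (Ej j) (Ej j) (Ej i)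
              + D2 (x,t) (Ej j) (Ej i) * D2 (x,t) (Ej j) (Ej i)))
          - ((f (u x t) + (-2*ε^σ*(u x t))) * D2 (x,t) (Ej j) (Ej j)
             + D1 (x,t) (Ej j) * (deriv f (u x t) * D1 (x,t) (Ej j)
                 + (-2*ε^σ) * D1 (x,t) (Ej j))))
        = ε^2 * (∑ i, D1 (x,t) (Ej i) * D3 (x,t) (Ej i) (Ej j) (Ej j))
          + ε^2 * (∑ i, D2 (x,t) (Ej j) (Ej i) * D2 (x,t) (Ej j) (Ej i))
          - (deriv f (u x t) + -2*ε^σ) * (D1 (x,t) (Ej j) * D1 (x,t) (Ej j))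
          - (f (u x t) + -2*ε^σ*u x t) * D2 (x,t) (Ej j) (Ej j) := by
      intro j
      have h2 : (∑ i, (D1 (x,t) (Ej i) * D3 (x,t) (Ej j) (Ej j) (Ej i)
              + D2 (x,t) (Ej j) (Ej i) * D2 (x,t) (Ej j) (Ej i)))
          = (∑ i, D1 (x,t) (Ej i) * D3 (x,t) (Ej i) (Ej j) (Ej j))
            + (∑ i, D2 (x,t) (Ej j) (Ej i) * D2 (x,t) (Ej j) (Ej i)) := by
        rw [Finset.sum_add_distrib]
        congr 1
        exact Finset.sum_congr rfl fun i _ => by rw [hthird j i]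
      rw [h2]; ring
    rw [Finset.sum_congr rfl fun j _ => h1 j]
    rw [Finset.sum_sub_distrib, Finset.sum_sub_distrib, Finset.sum_add_distrib,
      ← Finset.mul_sum, ← Finset.mul_sum, ← Finset.mul_sum, ← Finset.mul_sum]
    rw [hSgKdef, hBdef, hG2def, hTdef]
    rw [Finset.sum_comm (f := fun j i => D1 (x,t) (Ej i) * D3 (x,t) (Ej i) (Ej j) (Ej j))]
    rw [show (∑ i, ∑ j, D1 (x,t) (Ej i) * D3 (x,t) (Ej i) (Ej j) (Ej j))
        = ∑ i, D1 (x,t) (Ej i) * (∑ j, D3 (x,t) (Ej i) (Ej j) (Ej j))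
      from Finset.sum_congr rfl fun i _ => by rw [Finset.mul_sum]]
  -- time derivative in final form
  have htime3 : deriv (fun s => φG x s) t
      = ε^2*SgK - deriv f (u x t)*G2 - (f (u x t) + -2*ε^σ*u x t)*T
        + (f (u x t) + -2*ε^σ*u x t)*(f (u x t))/ε^2 := by
    rw [htime, hLLeval]
    have hτ0 : D1 (x,t) τ = T - f (u x t)/ε^2 := by
      have h := hpde _ hp0
      rw [h, hv0, hTdef]
    have hτi : ∀ i : Fin N, D2 (x,t) τ (Ej i)
        = (∑ j, D3 (x,t) (Ej i) (Ej j) (Ej j)) - deriv f (u x t) * D1 (x,t) (Ej i)/ε^2 := by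
      intro i
      rw [hsym2 _ hp0 τ (Ej i)]
      exact hpde' i
    rw [show (∑ i, D1 (x,t) (Ej i) * D2 (x,t) τ (Ej i))
        = ∑ i, D1 (x,t) (Ej i) * ((∑ j, D3 (x,t) (Ej i) (Ej j) (Ej j))
            - deriv f (u x t) * D1 (x,t) (Ej i)/ε^2)
      from Finset.sum_congr rfl fun i _ => by rw [hτi i]]
    rw [hτ0, hv0]
    have hsplit : (∑ i, D1 (x,t) (Ej i) * ((∑ j, D3 (x,t) (Ej i) (Ej j) (Ej j))
            - deriv f (u x t) * D1 (x,t) (Ej i)/ε^2))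
        = SgK - (deriv f (u x t)/ε^2) * G2 := by
      rw [hSgKdef, hG2def, Finset.mul_sum, ← Finset.sum_sub_distrib]
      exact Finset.sum_congr rfl fun i _ => by ring
    rw [hsplit]
    have hεne : (ε:ℝ) ≠ 0 := ne_of_gt hε
    field_simp
    ring
  -- inner product in final form
  have hinner2 : ⟪gradient (fun y => u y t) x, gradient (fun y => φG y t) x⟫
      = ε^2*W - (f (u x t) + -2*ε^σ*u x t)*G2 := by
    rw [hinner]
    rw [show (∑ i, D1 (x,t) (Ej i) * LL (x,t) (Ej i))
        = ∑ i, (ε^2 * (∑ k, (D1 (x,t) (Ej i) * D1 (x,t) (Ej k)) * D2 (x,t) (Ej i) (Ej k))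
            - (f (u x t) + -2*ε^σ*u x t) * (D1 (x,t) (Ej i) * D1 (x,t) (Ej i)))
      from Finset.sum_congr rfl fun i _ => by
        rw [hLLeval, hv0]
        have e : (∑ k, (D1 (x,t) (Ej i) * D1 (x,t) (Ej k)) * D2 (x,t) (Ej i) (Ej k))
            = D1 (x,t) (Ej i) * (∑ k, D1 (x,t) (Ej k) * D2 (x,t) (Ej i) (Ej k)) := by
          rw [Finset.mul_sum]
          exact Finset.sum_congr rfl fun k _ => by ring
        rw [e]; ring]
    rw [Finset.sum_sub_distrib, ← Finset.mul_sum, ← Finset.mul_sum, hWdef, hG2def]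
  -- value of φG in final form
  have hφ2 : φG x t = ε^2/2*G2 - F (u x t) - ε^σ*(2*H₀ - (u x t)^2) := by
    rw [hφG x t, hnorm2]
  -- put everything together
  rw [hlap2, htime3, hφ2, hinner2, hnorm2]
  exact final_alg' ε σ H₀ (u x t) (f (u x t)) (deriv f (u x t)) (F (u x t)) SgK B G2 T W
    hε hG2pos hCS
end

section
/- Let 0 ≤ t₀ < s and let C₃, C₄, C₅ ≥ 0. Let G : [t₀, s) → [0,∞) be continuous on [t₀, s) and differentiable on (t₀, s), and suppose that G'(t) ≤ C₃ (s − t)^{-1/2} G(t) + C₄ + C₅ (s − t)^{-1/2} for every t ∈ (t₀, s). Then for every t ∈ [t₀, s): G(t) ≤ exp( 2C₃ (√(s − t₀) − √(s − t)) ) · [ G(t₀) + C₄ (t − t₀) + 2C₅ (√(s − t₀) − √(s − t)) ]. -/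
/-- Gronwall-type lemma, inequality (1.24): if the nonnegative function `G`
satisfies `G' ≤ C₃ (s−t)^{-1/2} G + C₄ + C₅ (s−t)^{-1/2}` on `(t₀,s)`, then
`G(t) ≤ exp(2C₃(√(s−t₀) − √(s−t))) (G(t₀) + C₄(t−t₀) + 2C₅(√(s−t₀) − √(s−t)))`. -/
theorem gronwall_sqrt_singularity
    (t₀ s : ℝ) (ht₀ : 0 ≤ t₀) (hts : t₀ < s)
    (C₃ C₄ C₅ : ℝ) (hC₃ : 0 ≤ C₃) (hC₄ : 0 ≤ C₄) (hC₅ : 0 ≤ C₅)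
    (G : ℝ → ℝ)
    (hGcont : ContinuousOn G (Set.Ico t₀ s))
    (hGnn : ∀ t ∈ Set.Ico t₀ s, 0 ≤ G t)
    (hGdiff : ∀ t ∈ Set.Ioo t₀ s, DifferentiableAt ℝ G t)
    (hGineq : ∀ t ∈ Set.Ioo t₀ s,
      deriv G t ≤ C₃ * (Real.sqrt (s - t))⁻¹ * G t + C₄ + C₅ * (Real.sqrt (s - t))⁻¹) :
    ∀ t ∈ Set.Ico t₀ s,
      G t ≤ Real.exp (2 * C₃ * (Real.sqrt (s - t₀) - Real.sqrt (s - t)))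
        * (G t₀ + C₄ * (t - t₀) + 2 * C₅ * (Real.sqrt (s - t₀) - Real.sqrt (s - t))) := by
  intro t ht
  obtain ⟨ht1, ht2⟩ := ht
  set K := Real.sqrt (s - t₀) with hK
  set g : ℝ → ℝ := fun τ =>
    Real.exp (-(2 * C₃ * (K - Real.sqrt (s - τ)))) * G τ - C₄ * (τ - t₀)
      - 2 * C₅ * (K - Real.sqrt (s - τ)) with hg
  -- continuity of g on Icc t₀ t
  have hsub : Set.Icc t₀ t ⊆ Set.Ico t₀ s := fun x hx => ⟨hx.1, lt_of_le_of_lt hx.2 ht2⟩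
  have hsqcont : Continuous fun τ : ℝ => Real.sqrt (s - τ) :=
    Real.continuous_sqrt.comp (continuous_const.sub continuous_id)
  have hgcont : ContinuousOn g (Set.Icc t₀ t) := by
    apply ContinuousOn.sub
    apply ContinuousOn.sub
    · exact ((Real.continuous_exp.comp
        ((continuous_const.mul (continuous_const.sub hsqcont)).neg)).continuousOn).mul
        (hGcont.mono hsub)
    · exact (continuous_const.mul (continuous_id.sub continuous_const)).continuousOn
    · exact (continuous_const.mul (continuous_const.sub hsqcont)).continuousOn
  -- derivative bound on interior
  have hderiv : ∀ τ ∈ Set.Ioo t₀ t, deriv g τ ≤ 0 := by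
    intro τ hτ
    have hτs : τ ∈ Set.Ioo t₀ s := ⟨hτ.1, lt_trans hτ.2 ht2⟩
    have hpos : 0 < s - τ := by linarith [hτs.2]
    have hsqpos : 0 < Real.sqrt (s - τ) := Real.sqrt_pos.mpr hpos
    have hsq : HasDerivAt (fun τ : ℝ => Real.sqrt (s - τ))
        (1 / (2 * Real.sqrt (s - τ)) * (-1)) τ :=
      (Real.hasDerivAt_sqrt (ne_of_gt hpos)).comp τ ((hasDerivAt_id τ).const_sub s)
    have hψ := ((hsq.const_sub K).const_mul (2 * C₃)).neg
    have hG' : HasDerivAt G (deriv G τ) τ := (hGdiff τ hτs).hasDerivAt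
    have hgd0 := ((hψ.exp.mul hG').sub (((hasDerivAt_id τ).sub_const t₀).const_mul C₄)).sub
        ((hsq.const_sub K).const_mul (2 * C₅))
    have hgd : HasDerivAt g
        (Real.exp (-(2 * C₃ * (K - Real.sqrt (s - τ)))) *
            -(2 * C₃ * -(1 / (2 * Real.sqrt (s - τ)) * -1)) * G τ
          + Real.exp (-(2 * C₃ * (K - Real.sqrt (s - τ)))) * deriv G τ
          - C₄ * 1
          - 2 * C₅ * -(1 / (2 * Real.sqrt (s - τ)) * -1)) τ := hgd0
    rw [hgd.deriv]
    set e := Real.exp (-(2 * C₃ * (K - Real.sqrt (s - τ)))) with he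
    have hepos : 0 < e := Real.exp_pos _
    have hele : e ≤ 1 := by
      rw [he]
      apply Real.exp_le_one_iff.mpr
      have : Real.sqrt (s - τ) ≤ K := by
        rw [hK]
        exact Real.sqrt_le_sqrt (by linarith [hτs.1])
      nlinarith
    have hB : 0 ≤ C₄ + C₅ * (Real.sqrt (s - τ))⁻¹ := by positivity
    have hX : deriv G τ - C₃ * (Real.sqrt (s - τ))⁻¹ * G τ ≤ C₄ + C₅ * (Real.sqrt (s - τ))⁻¹ := by
      have := hGineq τ hτs; linarith
    have key : e * (deriv G τ - C₃ * (Real.sqrt (s - τ))⁻¹ * G τ)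
        ≤ C₄ + C₅ * (Real.sqrt (s - τ))⁻¹ :=
      le_trans (mul_le_mul_of_nonneg_left hX hepos.le) (by nlinarith)
    have hrw : e * -(2 * C₃ * -(1 / (2 * Real.sqrt (s - τ)) * -1)) * G τ
          + e * deriv G τ - C₄ * 1
          - 2 * C₅ * -(1 / (2 * Real.sqrt (s - τ)) * -1)
        = e * (deriv G τ - C₃ * (Real.sqrt (s - τ))⁻¹ * G τ)
          - (C₄ + C₅ * (Real.sqrt (s - τ))⁻¹) := by
      field_simp
      ring
    rw [hrw]
    linarith
  -- g is antitone on Icc t₀ t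
  have hgdiff : ∀ τ ∈ Set.Ioo t₀ t, DifferentiableAt ℝ g τ := by
    intro τ hτ
    have hτs : τ ∈ Set.Ioo t₀ s := ⟨hτ.1, lt_trans hτ.2 ht2⟩
    have hpos : 0 < s - τ := by linarith [hτs.2]
    have hsq : DifferentiableAt ℝ (fun τ : ℝ => Real.sqrt (s - τ)) τ :=
      ((Real.hasDerivAt_sqrt (ne_of_gt hpos)).comp τ
        ((hasDerivAt_id τ).const_sub s)).differentiableAt
    exact (((((hsq.const_sub K).const_mul (2*C₃)).neg.exp).mul (hGdiff τ hτs)).sub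
      (by fun_prop)).sub ((hsq.const_sub K).const_mul (2*C₅))
  have hanti : AntitoneOn g (Set.Icc t₀ t) := by
    apply antitoneOn_of_deriv_nonpos (convex_Icc t₀ t) hgcont
    · rw [interior_Icc]; intro τ hτ; exact (hgdiff τ hτ).differentiableWithinAt
    · rw [interior_Icc]; exact hderiv
  have hle : g t ≤ g t₀ :=
    hanti (Set.left_mem_Icc.mpr ht1) (Set.right_mem_Icc.mpr ht1) ht1
  have hgt0 : g t₀ = G t₀ := by
    simp [hg, hK]
  rw [hgt0] at hle
  simp only [hg] at hle
  set e := Real.exp (-(2 * C₃ * (K - Real.sqrt (s - t)))) with he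
  have hepos : 0 < e := Real.exp_pos _
  have hexp : Real.exp (2 * C₃ * (K - Real.sqrt (s - t))) = e⁻¹ := by
    rw [he, ← Real.exp_neg, neg_neg]
  rw [hexp]
  have : e * G t ≤ G t₀ + C₄ * (t - t₀) + 2 * C₅ * (K - Real.sqrt (s - t)) := by linarith
  calc G t = e⁻¹ * (e * G t) := by field_simp
    _ ≤ e⁻¹ * (G t₀ + C₄ * (t - t₀) + 2 * C₅ * (K - Real.sqrt (s - t))) :=
        mul_le_mul_of_nonneg_left this (inv_pos.mpr hepos).le
end
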